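/- Let Ω̂ = {ω_1,…,ω_n} be a finite probability space with equal probabilities p_i = 1/n, i = 1,…,n, and let ϱ be a law invariant coherent risk measure on the space of random variables Y : Ω̂ → ℝ. Then ϱ is regular; in particular ϱ admits a Kusuoka representation: there exists a set 𝔐 of probability measures on [0,1] with zero mass at {1} such that ϱ(Y) = sup_{μ∈𝔐} ∫₀¹ AV@R_α(Y) dμ(α) for every Y : Ω̂ → ℝ. -/

import Mathlib

open MeasureTheory Set Filter Topology
open scoped ENNReal

noncomputable section

/-- The standard probability space: the uniform (Lebesgue) probability measure on `[0,1] ⊆ ℝ`. -/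
def stdP : Measure ℝ := volume.restrict (Icc (0:ℝ) 1)

/-- Cumulative distribution function of a random variable `Z` on the standard space. -/
def cdf (Z : ℝ → ℝ) (z : ℝ) : ℝ := (stdP {ω | Z ω ≤ z}).toReal

/-- Right-side quantile function `F_Z^{-1}(τ) = sup{t : F_Z(t) ≤ τ}`. -/
def quant (Z : ℝ → ℝ) (τ : ℝ) : ℝ := sSup {t : ℝ | cdf Z t ≤ τ}

/-- Average Value-at-Risk at level `α`. -/
def avar (Z : ℝ → ℝ) (α : ℝ) : ℝ := (1 - α)⁻¹ * ∫ τ in Ioc α 1, quant Z τ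

/-- The scalar product `⟨ζ, Z⟩ = ∫₀¹ ζ(τ) Z(τ) dτ`. -/
def pairing (ζ Z : ℝ → ℝ) : ℝ := ∫ ω, ζ ω * Z ω ∂stdP

/-- Expectation w.r.t. the standard probability space. -/
def expct (Z : ℝ → ℝ) : ℝ := ∫ ω, Z ω ∂stdP

/-- `μ ∈ 𝔓`: a probability measure supported on `[0,1]` with zero mass at `{1}`. -/
def IsP01 (μ : Measure ℝ) : Prop :=
  IsProbabilityMeasure μ ∧ μ (Icc (0:ℝ) 1)ᶜ = 0 ∧ μ {(1:ℝ)} = 0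

/-- cdf of a measure on ℝ. -/
def mcdf (μ : Measure ℝ) (x : ℝ) : ℝ := (μ (Iic x)).toReal

/-- First order stochastic dominance `μ ≼ ν`, i.e. `μ(x) ≥ ν(x)` for all `x`. -/
def FSD (μ ν : Measure ℝ) : Prop := ∀ x : ℝ, mcdf ν x ≤ mcdf μ x

/-- The map `𝕋`: `(𝕋μ)(τ) = ∫_{[0,τ]} (1-α)⁻¹ dμ(α)`. -/
def Tmap (μ : Measure ℝ) (τ : ℝ) : ℝ := ∫ α in Icc (0:ℝ) τ, (1 - α)⁻¹ ∂μ

/-- Spectral function: nonnegative, nondecreasing, right-continuous on `[0,1)`,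
integrating to one. -/
def IsSpectral (σ : ℝ → ℝ) : Prop :=
  (∀ t ∈ Ico (0:ℝ) 1, 0 ≤ σ t) ∧ MonotoneOn σ (Ico (0:ℝ) 1) ∧
  (∀ t ∈ Ico (0:ℝ) 1, ContinuousWithinAt σ (Ici t) t) ∧
  (∫ t in Ioo (0:ℝ) 1, σ t) = 1

/-- An element of `L_q` is (a.e.) spectral if it has a spectral representative. -/
def IsSpectralAE (σ : ℝ → ℝ) : Prop := ∃ σ₀ : ℝ → ℝ, IsSpectral σ₀ ∧ σ =ᵐ[stdP] σ₀

/-- `∫₀¹ AV@R_α(Z) dμ(α)`. -/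
def kusuokaIntegral (μ : Measure ℝ) (Z : ℝ → ℝ) : ℝ := ∫ α, avar Z α ∂μ

/-- `∫₀¹ σ(τ) F_Z^{-1}(τ) dτ`. -/
def spectralIntegral (σ Z : ℝ → ℝ) : ℝ := ∫ t in Ioo (0:ℝ) 1, σ t * quant Z t

/-- Coherent risk measure on `L_p` of the standard space: monotone, convex,
translation equivariant and positively homogeneous. -/
def IsCoherent (p : ℝ≥0∞) (ρ : (ℝ → ℝ) → ℝ) : Prop :=
  (∀ Z Z' : ℝ → ℝ, MemLp Z p stdP → MemLp Z' p stdP →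
      (∀ᵐ ω ∂stdP, Z' ω ≤ Z ω) → ρ Z' ≤ ρ Z) ∧
  (∀ Z Z' : ℝ → ℝ, ∀ t : ℝ, MemLp Z p stdP → MemLp Z' p stdP → t ∈ Icc (0:ℝ) 1 →
      ρ (fun ω => t * Z ω + (1 - t) * Z' ω) ≤ t * ρ Z + (1 - t) * ρ Z') ∧
  (∀ Z : ℝ → ℝ, ∀ a : ℝ, MemLp Z p stdP → ρ (fun ω => Z ω + a) = ρ Z + a) ∧
  (∀ Z : ℝ → ℝ, ∀ t : ℝ, MemLp Z p stdP → 0 ≤ t → ρ (fun ω => t * Z ω) = t * ρ Z)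

/-- Law invariance: distributionally equivalent random variables get the same value. -/
def IsLawInvariant (p : ℝ≥0∞) (ρ : (ℝ → ℝ) → ℝ) : Prop :=
  ∀ Z Z' : ℝ → ℝ, MemLp Z p stdP → MemLp Z' p stdP → cdf Z = cdf Z' → ρ Z = ρ Z'

/-- `𝔐 ⊆ 𝔓` is a Kusuoka set for `ρ` : `ρ(Z) = sup_{μ∈𝔐} ∫₀¹ AV@R_α(Z) dμ(α)`. -/
def IsKusuokaSet (p : ℝ≥0∞) (ρ : (ℝ → ℝ) → ℝ) (M : Set (Measure ℝ)) : Prop :=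
  (∀ μ ∈ M, IsP01 μ) ∧
  ∀ Z : ℝ → ℝ, MemLp Z p stdP →
    IsLUB {x : ℝ | ∃ μ ∈ M, x = kusuokaIntegral μ Z} (ρ Z)

/-- `Υ ⊆ 𝔖` is a generating set for `ρ` : `ρ(Z) = sup_{σ∈Υ} ∫₀¹ σ(τ) F_Z^{-1}(τ) dτ`. -/
def IsGeneratingSet (p : ℝ≥0∞) (ρ : (ℝ → ℝ) → ℝ) (Υ : Set (ℝ → ℝ)) : Prop :=
  (∀ σ ∈ Υ, IsSpectralAE σ) ∧
  ∀ Z : ℝ → ℝ, MemLp Z p stdP →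
    IsLUB {x : ℝ | ∃ σ ∈ Υ, x = spectralIntegral σ Z} (ρ Z)

/-- The dual set `𝔄 = {ζ ∈ Z* : ⟨ζ,Z⟩ ≤ ρ(Z) for all Z ∈ Z}`. -/
def dualSet (p q : ℝ≥0∞) (ρ : (ℝ → ℝ) → ℝ) : Set (ℝ → ℝ) :=
  {ζ : ℝ → ℝ | MemLp ζ q stdP ∧ ∀ Z : ℝ → ℝ, MemLp Z p stdP → pairing ζ Z ≤ ρ Z}

/-- `Z` exposes `A` at `ζbar`: `ζ ↦ ⟨ζ,Z⟩` attains its maximum over `A`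
at the unique (up to a.e. equality) point `ζbar`. -/
def Exposes (A : Set (ℝ → ℝ)) (Z ζbar : ℝ → ℝ) : Prop :=
  ζbar ∈ A ∧ (∀ ζ ∈ A, pairing ζ Z ≤ pairing ζbar Z) ∧
  ∀ ζ ∈ A, pairing ζ Z = pairing ζbar Z → ζ =ᵐ[stdP] ζbar

/-- The set `Exp(A)` of weak* exposed points of `A`. -/
def expPoints (p : ℝ≥0∞) (A : Set (ℝ → ℝ)) : Set (ℝ → ℝ) :=
  {ζ : ℝ → ℝ | ∃ Z : ℝ → ℝ, MemLp Z p stdP ∧ Exposes A Z ζ}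

/-- The weak* topology on (densities of) elements of `Z* = L_q`, induced by the
pairings against elements of `Z = L_p`. -/
def wstarTop (p : ℝ≥0∞) : TopologicalSpace (ℝ → ℝ) :=
  TopologicalSpace.induced
    (fun ζ => fun Z : {Z : ℝ → ℝ // MemLp Z p stdP} => pairing ζ Z.1)
    Pi.topologicalSpace

/-- Weak* closure. -/
def wstarClosure (p : ℝ≥0∞) (S : Set (ℝ → ℝ)) : Set (ℝ → ℝ) :=
  @closure _ (wstarTop p) S

/-- Weak* closedness. -/
def IsWStarClosed (p : ℝ≥0∞) (S : Set (ℝ → ℝ)) : Prop :=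
  @IsClosed _ (wstarTop p) S

/-- The weak topology of measures, induced by integration of bounded continuous functions. -/
def weakTopM : TopologicalSpace (Measure ℝ) :=
  TopologicalSpace.induced
    (fun μ => fun f : BoundedContinuousFunction ℝ ℝ => ∫ x, f x ∂μ)
    Pi.topologicalSpace

/-- Closure in the weak topology of measures. -/
def weakClosureM (M : Set (Measure ℝ)) : Set (Measure ℝ) := @closure _ weakTopM M

/-- Closure within `𝔓` (in the weak topology of measures). -/
def closureP (M : Set (Measure ℝ)) : Set (Measure ℝ) := weakClosureM M ∩ {μ | IsP01 μ}

/-- Closedness within `𝔓`. -/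
def IsClosedInP (M : Set (Measure ℝ)) : Prop := closureP M ⊆ M

/-- The minimal Kusuoka set: a closed Kusuoka set contained in every closed Kusuoka set. -/
def IsMinimalKusuoka (p : ℝ≥0∞) (ρ : (ℝ → ℝ) → ℝ) (M : Set (Measure ℝ)) : Prop :=
  IsKusuokaSet p ρ M ∧ IsClosedInP M ∧
  ∀ M' : Set (Measure ℝ), IsKusuokaSet p ρ M' → IsClosedInP M' → M ⊆ M'

/-- Measure-preserving transformations of `[0,1]`: bijections of `[0,1]` with
`P(T(A)) = P(A)` for all measurable `A`. -/
def IsMPT (T : ℝ → ℝ) : Prop :=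
  Measurable T ∧ BijOn T (Icc (0:ℝ) 1) (Icc (0:ℝ) 1) ∧
  ∀ A : Set ℝ, MeasurableSet A → stdP (T '' A) = stdP A

/-- cdf of a random variable on a finite probability space with weights `pr`. -/
def cdfFinW {n : ℕ} (pr : Fin n → ℝ) (Y : Fin n → ℝ) (z : ℝ) : ℝ :=
  ∑ i ∈ Finset.univ.filter (fun i => Y i ≤ z), pr i

/-- right-side quantile on a finite probability space. -/
def quantFinW {n : ℕ} (pr : Fin n → ℝ) (Y : Fin n → ℝ) (τ : ℝ) : ℝ :=
  sSup {t : ℝ | cdfFinW pr Y t ≤ τ}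

/-- Average Value-at-Risk on a finite probability space. -/
def avarFinW {n : ℕ} (pr : Fin n → ℝ) (Y : Fin n → ℝ) (α : ℝ) : ℝ :=
  (1 - α)⁻¹ * ∫ τ in Ioc α 1, quantFinW pr Y τ


/-! ### Auxiliary development -/

section Aux

open scoped BigOperators

instance stdP_prob : IsProbabilityMeasure stdP := by
  constructor
  rw [stdP, Measure.restrict_apply_univ, Real.volume_Icc]
  norm_num

lemma cdf_nonneg (Z : ℝ → ℝ) (z : ℝ) : 0 ≤ cdf Z z := ENNReal.toReal_nonneg

lemma cdf_le_one (Z : ℝ → ℝ) (z : ℝ) : cdf Z z ≤ 1 := by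
  rw [cdf]
  have h : stdP {ω | Z ω ≤ z} ≤ 1 := (measure_mono (subset_univ _)).trans_eq measure_univ
  calc (stdP {ω | Z ω ≤ z}).toReal ≤ (1 : ℝ≥0∞).toReal :=
        ENNReal.toReal_mono (by norm_num) h
    _ = 1 := by simp

lemma cdf_mono (Z : ℝ → ℝ) : Monotone (cdf Z) := by
  intro a b hab
  exact ENNReal.toReal_mono (measure_ne_top _ _)
    (measure_mono (fun ω (h : Z ω ≤ a) => h.trans hab))

lemma cdf_congr {Z Z' : ℝ → ℝ} (h : Z =ᵐ[stdP] Z') : cdf Z = cdf Z' := by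
  funext z
  rw [cdf, cdf, measure_congr]
  exact eventuallyEq_set.2 (h.mono fun ω hω => by simp [hω])

lemma quant_congr {Z Z' : ℝ → ℝ} (h : cdf Z = cdf Z') : quant Z = quant Z' := by
  funext τ; rw [quant, quant, h]

/-- The set whose sup is the quantile. -/
lemma quant_def (Z : ℝ → ℝ) (τ : ℝ) : quant Z τ = sSup {t : ℝ | cdf Z t ≤ τ} := rfl

lemma cdf_lt_of_lt (Z : ℝ → ℝ) (hZ : Measurable Z) {τ : ℝ} (hτ : 0 < τ) :
    ∃ t : ℝ, cdf Z t < τ := by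
  have hms : ∀ k : ℕ, MeasurableSet {ω : ℝ | Z ω ≤ -(k : ℝ)} := fun k =>
    hZ measurableSet_Iic
  have hmon : Antitone (fun k : ℕ => {ω : ℝ | Z ω ≤ -(k : ℝ)}) := by
    intro k l hkl ω (h : Z ω ≤ -(l:ℝ))
    exact h.trans (by exact_mod_cast neg_le_neg (by exact_mod_cast hkl))
  have hnul : (⋂ k : ℕ, {ω : ℝ | Z ω ≤ -(k : ℝ)}) = ∅ := by
    ext ω
    simp only [mem_iInter, mem_setOf_eq, mem_empty_iff_false, iff_false, not_forall]
    obtain ⟨k, hk⟩ := exists_nat_gt (-(Z ω))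
    exact ⟨k, by push_neg; linarith⟩
  have htend := tendsto_measure_iInter_atTop (μ := stdP)
    (s := fun k : ℕ => {ω : ℝ | Z ω ≤ -(k : ℝ)})
    (fun k => (hms k).nullMeasurableSet) hmon ⟨0, measure_ne_top _ _⟩
  rw [hnul, measure_empty] at htend
  have hoflt : (0 : ℝ≥0∞) < ENNReal.ofReal τ := by simpa using hτ
  obtain ⟨k, hk⟩ := (htend.eventually (eventually_lt_nhds hoflt)).exists
  exact ⟨-(k:ℝ), ENNReal.toReal_lt_of_lt_ofReal hk⟩

lemma lt_cdf_of_lt (Z : ℝ → ℝ) (hZ : Measurable Z) {τ : ℝ} (hτ : τ < 1) :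
    ∃ t : ℝ, τ < cdf Z t := by
  set τ' : ℝ := max τ (1/2) with hτ'def
  have hτ'0 : 0 < τ' := lt_max_of_lt_right (by norm_num)
  have hτ'1 : τ' < 1 := max_lt hτ (by norm_num)
  suffices h : ∃ t, τ' < cdf Z t by
    obtain ⟨t, ht⟩ := h; exact ⟨t, (le_max_left _ _).trans_lt ht⟩
  have hmon : Monotone (fun k : ℕ => {ω : ℝ | Z ω ≤ (k : ℝ)}) := by
    intro k l hkl ω (h : Z ω ≤ (k:ℝ))
    exact h.trans (by exact_mod_cast hkl)
  have huniv : (⋃ k : ℕ, {ω : ℝ | Z ω ≤ (k : ℝ)}) = univ := by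
    ext ω
    simp only [mem_iUnion, mem_setOf_eq, mem_univ, iff_true]
    obtain ⟨k, hk⟩ := exists_nat_gt (Z ω)
    exact ⟨k, hk.le⟩
  have htend := tendsto_measure_iUnion_atTop (μ := stdP)
    (s := fun k : ℕ => {ω : ℝ | Z ω ≤ (k : ℝ)}) hmon
  rw [huniv, measure_univ] at htend
  have hlt : ENNReal.ofReal τ' < 1 := by
    rw [← ENNReal.ofReal_one]
    exact (ENNReal.ofReal_lt_ofReal_iff_of_nonneg hτ'0.le).2 hτ'1
  obtain ⟨k, hk⟩ := (htend.eventually (eventually_gt_nhds hlt)).exists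
  refine ⟨(k:ℝ), ?_⟩
  exact (ENNReal.ofReal_lt_iff_lt_toReal hτ'0.le (measure_ne_top _ _)).1 hk

end Aux


lemma quantSet_nonempty (Z : ℝ → ℝ) (hZ : Measurable Z) {τ : ℝ} (hτ : 0 < τ) :
    {t : ℝ | cdf Z t ≤ τ}.Nonempty := by
  obtain ⟨t, ht⟩ := cdf_lt_of_lt Z hZ hτ
  exact ⟨t, ht.le⟩

lemma quantSet_bddAbove (Z : ℝ → ℝ) (hZ : Measurable Z) {τ : ℝ} (hτ : τ < 1) :
    BddAbove {t : ℝ | cdf Z t ≤ τ} := by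
  obtain ⟨t₀, ht₀⟩ := lt_cdf_of_lt Z hZ hτ
  refine ⟨t₀, fun t (ht : cdf Z t ≤ τ) => ?_⟩
  by_contra hc
  push_neg at hc
  exact absurd (cdf_mono Z hc.le) (by linarith)

lemma quant_monotoneOn (Z : ℝ → ℝ) (hZ : Measurable Z) :
    MonotoneOn (quant Z) (Ioo (0:ℝ) 1) := by
  intro a ha b hb hab
  exact csSup_le_csSup (quantSet_bddAbove Z hZ hb.2)
    (quantSet_nonempty Z hZ ha.1) (fun t (ht : cdf Z t ≤ a) => ht.trans hab)

lemma cdf_rightlim (Z : ℝ → ℝ) (hZ : Measurable Z) {v τ : ℝ} (h : cdf Z v < τ) :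
    ∃ t, v < t ∧ cdf Z t < τ := by
  have hms : ∀ k : ℕ, MeasurableSet {ω : ℝ | Z ω ≤ v + 1/((k:ℝ)+1)} := fun k =>
    hZ measurableSet_Iic
  have hmon : Antitone (fun k : ℕ => {ω : ℝ | Z ω ≤ v + 1/((k:ℝ)+1)}) := by
    intro k l hkl ω (hω : Z ω ≤ v + 1/((l:ℝ)+1))
    refine hω.trans (add_le_add_right ?_ v)
    apply one_div_le_one_div_of_le (by positivity)
    exact_mod_cast add_le_add_left (Nat.cast_le.2 hkl) 1
  have hint : (⋂ k : ℕ, {ω : ℝ | Z ω ≤ v + 1/((k:ℝ)+1)}) = {ω : ℝ | Z ω ≤ v} := by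
    ext ω
    simp only [mem_iInter, mem_setOf_eq]
    constructor
    · intro hω
      by_contra hc
      push_neg at hc
      obtain ⟨k, hk⟩ := exists_nat_one_div_lt (sub_pos.2 hc)
      exact absurd (hω k) (by push_neg; linarith)
    · intro hω k
      have : (0:ℝ) < 1/((k:ℝ)+1) := by positivity
      linarith
  have htend := tendsto_measure_iInter_atTop (μ := stdP)
    (s := fun k : ℕ => {ω : ℝ | Z ω ≤ v + 1/((k:ℝ)+1)})
    (fun k => (hms k).nullMeasurableSet) hmon ⟨0, measure_ne_top _ _⟩
  rw [hint] at htend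
  have hlim : stdP {ω : ℝ | Z ω ≤ v} < ENNReal.ofReal τ := by
    have h0τ : 0 ≤ τ := le_trans (cdf_nonneg Z v) h.le
    rw [← ENNReal.ofReal_toReal (measure_ne_top stdP {ω : ℝ | Z ω ≤ v})]
    exact ENNReal.ofReal_lt_ofReal_iff_of_nonneg ENNReal.toReal_nonneg |>.2 h
  obtain ⟨k, hk⟩ := (htend.eventually (eventually_lt_nhds hlim)).exists
  refine ⟨v + 1/((k:ℝ)+1), by
    have : (0:ℝ) < 1/((k:ℝ)+1) := by positivity
    linarith, ?_⟩
  exact ENNReal.toReal_lt_of_lt_ofReal hk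

lemma cdf_leftlim (Z : ℝ → ℝ) (hZ : Measurable Z) {u τ : ℝ}
    (h : τ < (stdP {ω | Z ω < u}).toReal) : ∃ w, w < u ∧ τ < cdf Z w := by
  rcases lt_or_ge τ 0 with h0 | h0
  · exact ⟨u - 1, by linarith, h0.trans_le (cdf_nonneg Z _)⟩
  have hmon : Monotone (fun k : ℕ => {ω : ℝ | Z ω ≤ u - 1/((k:ℝ)+1)}) := by
    intro k l hkl ω (hω : Z ω ≤ u - 1/((k:ℝ)+1))
    refine hω.trans (sub_le_sub_left ?_ u)
    apply one_div_le_one_div_of_le (by positivity)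
    exact_mod_cast add_le_add_left (Nat.cast_le.2 hkl) 1
  have huni : (⋃ k : ℕ, {ω : ℝ | Z ω ≤ u - 1/((k:ℝ)+1)}) = {ω : ℝ | Z ω < u} := by
    ext ω
    simp only [mem_iUnion, mem_setOf_eq]
    constructor
    · rintro ⟨k, hk⟩
      have : (0:ℝ) < 1/((k:ℝ)+1) := by positivity
      linarith
    · intro hω
      obtain ⟨k, hk⟩ := exists_nat_one_div_lt (sub_pos.2 hω)
      exact ⟨k, by linarith⟩
  have htend := tendsto_measure_iUnion_atTop (μ := stdP)
    (s := fun k : ℕ => {ω : ℝ | Z ω ≤ u - 1/((k:ℝ)+1)}) hmon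
  rw [huni] at htend
  have hlt : ENNReal.ofReal τ < stdP {ω | Z ω < u} := by
    rw [← ENNReal.ofReal_toReal (measure_ne_top stdP {ω | Z ω < u})]
    exact (ENNReal.ofReal_lt_ofReal_iff_of_nonneg h0).2 h
  obtain ⟨k, hk⟩ := (htend.eventually (eventually_gt_nhds hlt)).exists
  refine ⟨u - 1/((k:ℝ)+1), by
    have : (0:ℝ) < 1/((k:ℝ)+1) := by positivity
    linarith, ?_⟩
  exact (ENNReal.ofReal_lt_iff_lt_toReal h0 (measure_ne_top _ _)).1 hk

lemma measure_quant_gt (Z : ℝ → ℝ) (hZ : Measurable Z) (v : ℝ) :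
    volume.restrict (Ioo (0:ℝ) 1) {τ | v < quant Z τ} = stdP {ω | v < Z ω} := by
  rw [Measure.restrict_apply' measurableSet_Ioo]
  have hsub1 : Ioo (cdf Z v) 1 ⊆ {τ | v < quant Z τ} ∩ Ioo 0 1 := by
    rintro τ ⟨hcv, hτ1⟩
    have hτ0 : 0 < τ := (cdf_nonneg Z v).trans_lt hcv
    obtain ⟨t, hvt, htτ⟩ := cdf_rightlim Z hZ hcv
    refine ⟨?_, hτ0, hτ1⟩
    exact lt_of_lt_of_le hvt (le_csSup (quantSet_bddAbove Z hZ hτ1) htτ.le)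
  have hsub2 : {τ | v < quant Z τ} ∩ Ioo 0 1 ⊆ Ico (cdf Z v) 1 := by
    rintro τ ⟨hq, hτ0, hτ1⟩
    obtain ⟨t, ht, hvt⟩ := exists_lt_of_lt_csSup (quantSet_nonempty Z hZ hτ0) hq
    exact ⟨(cdf_mono Z hvt.le).trans ht, hτ1⟩
  have hIoo : volume (Ioo (cdf Z v) 1) = ENNReal.ofReal (1 - cdf Z v) := Real.volume_Ioo
  have hIco : volume (Ico (cdf Z v) 1) = ENNReal.ofReal (1 - cdf Z v) := Real.volume_Ico
  have hA : volume ({τ | v < quant Z τ} ∩ Ioo 0 1) = ENNReal.ofReal (1 - cdf Z v) :=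
    le_antisymm (hIco ▸ measure_mono hsub2) (hIoo ▸ measure_mono hsub1)
  rw [hA]
  have hcompl : {ω : ℝ | v < Z ω} = {ω : ℝ | Z ω ≤ v}ᶜ := by
    ext ω; simp [not_le]
  have hms : MeasurableSet {ω : ℝ | Z ω ≤ v} := hZ measurableSet_Iic
  rw [hcompl, measure_compl hms (measure_ne_top _ _), measure_univ]
  rw [cdf, ENNReal.ofReal_sub _ ENNReal.toReal_nonneg,
    ENNReal.ofReal_toReal (measure_ne_top _ _), ENNReal.ofReal_one]

lemma measure_quant_lt (Z : ℝ → ℝ) (hZ : Measurable Z) (u : ℝ) :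
    volume.restrict (Ioo (0:ℝ) 1) {τ | quant Z τ < u} = stdP {ω | Z ω < u} := by
  rw [Measure.restrict_apply' measurableSet_Ioo]
  set c := stdP {ω | Z ω < u} with hc
  set r := c.toReal with hr
  have hr1 : r ≤ 1 := by
    rw [hr]
    calc c.toReal ≤ (1:ℝ≥0∞).toReal :=
          ENNReal.toReal_mono (by norm_num) ((measure_mono (subset_univ _)).trans_eq measure_univ)
      _ = 1 := by simp
  have hset : {τ | quant Z τ < u} ∩ Ioo 0 1 = Iio r ∩ Ioo 0 1 := by
    ext τ
    simp only [mem_inter_iff, mem_setOf_eq, mem_Iio, and_congr_left_iff]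
    rintro ⟨hτ0, hτ1⟩
    constructor
    · intro hq
      set v := (quant Z τ + u)/2 with hv
      have hv1 : quant Z τ < v := by rw [hv]; linarith
      have hv2 : v < u := by rw [hv]; linarith
      have hτv : ¬ (cdf Z v ≤ τ) := fun hle =>
        absurd (le_csSup (quantSet_bddAbove Z hZ hτ1) hle) (not_le.2 hv1)
      push_neg at hτv
      calc τ < cdf Z v := hτv
        _ ≤ r := by
          rw [hr, cdf]
          exact ENNReal.toReal_mono (measure_ne_top _ _)
            (measure_mono (fun ω (hω : Z ω ≤ v) => lt_of_le_of_lt hω hv2))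
    · intro hτr
      obtain ⟨w, hwu, hτw⟩ := cdf_leftlim Z hZ (hr ▸ hτr)
      have : quant Z τ ≤ w := by
        apply csSup_le (quantSet_nonempty Z hZ hτ0)
        intro t (ht : cdf Z t ≤ τ)
        by_contra hcw
        push_neg at hcw
        exact absurd (cdf_mono Z hcw.le) (by linarith)
      exact this.trans_lt hwu
  rw [hset]
  have h0r : 0 ≤ r := ENNReal.toReal_nonneg
  have : Iio r ∩ Ioo (0:ℝ) 1 = Ioo 0 (min r 1) := by
    ext x
    simp only [mem_inter_iff, mem_Iio, mem_Ioo, lt_min_iff]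
    tauto
  rw [this, Real.volume_Ioo, min_eq_left hr1, sub_zero, hr,
    ENNReal.ofReal_toReal (measure_ne_top _ _)]


lemma ofReal_eq_ofReal_sup (x : ℝ) : ENNReal.ofReal x = ENNReal.ofReal (x ⊔ 0) := by
  rcases le_total x 0 with h | h
  · rw [sup_eq_right.2 h, ENNReal.ofReal_eq_zero.2 h]; simp
  · rw [sup_eq_left.2 h]

lemma quant_aemeasurable (Z : ℝ → ℝ) (hZ : Measurable Z) :
    AEMeasurable (quant Z) (volume.restrict (Ioo (0:ℝ) 1)) :=
  aemeasurable_restrict_of_monotoneOn measurableSet_Ioo (quant_monotoneOn Z hZ)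

lemma lint_pospart (Z : ℝ → ℝ) (hZ : Measurable Z) (s : ℝ) :
    ∫⁻ τ in Ioo (0:ℝ) 1, ENNReal.ofReal (quant Z τ - s) =
      ∫⁻ ω, ENNReal.ofReal (Z ω - s) ∂stdP := by
  have hmq : AEMeasurable (fun τ => (quant Z τ - s) ⊔ 0) (volume.restrict (Ioo (0:ℝ) 1)) :=
    ((quant_aemeasurable Z hZ).sub aemeasurable_const).sup aemeasurable_const
  have hmz : AEMeasurable (fun ω => (Z ω - s) ⊔ 0) stdP :=
    ((hZ.sub measurable_const).sup measurable_const).aemeasurable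
  calc ∫⁻ τ in Ioo (0:ℝ) 1, ENNReal.ofReal (quant Z τ - s)
      = ∫⁻ τ in Ioo (0:ℝ) 1, ENNReal.ofReal ((quant Z τ - s) ⊔ 0) := by
        exact lintegral_congr fun τ => ofReal_eq_ofReal_sup _
    _ = ∫⁻ v in Ioi (0:ℝ), volume.restrict (Ioo (0:ℝ) 1) {τ | v < (quant Z τ - s) ⊔ 0} := by
        exact lintegral_eq_lintegral_meas_lt _ (ae_of_all _ fun τ => le_sup_right) hmq
    _ = ∫⁻ v in Ioi (0:ℝ), stdP {ω | v < (Z ω - s) ⊔ 0} := by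
        apply setLIntegral_congr_fun measurableSet_Ioi
        intro v hv
        have hv0 : (0:ℝ) < v := hv
        have h1 : {τ : ℝ | v < (quant Z τ - s) ⊔ 0} = {τ | (s + v) < quant Z τ} := by
          ext τ
          simp only [mem_setOf_eq, lt_sup_iff]
          constructor
          · rintro (h | h)
            · linarith
            · linarith
          · intro h; left; linarith
        have h2 : {ω : ℝ | v < (Z ω - s) ⊔ 0} = {ω | (s + v) < Z ω} := by
          ext ω
          simp only [mem_setOf_eq, lt_sup_iff]
          constructor
          · rintro (h | h)
            · linarith
            · linarith
          · intro h; left; linarith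
        beta_reduce
        rw [h1, h2, measure_quant_gt Z hZ]
    _ = ∫⁻ ω, ENNReal.ofReal ((Z ω - s) ⊔ 0) ∂stdP := by
        exact (lintegral_eq_lintegral_meas_lt _ (ae_of_all _ fun ω => le_sup_right) hmz).symm
    _ = ∫⁻ ω, ENNReal.ofReal (Z ω - s) ∂stdP := by
        exact lintegral_congr fun ω => (ofReal_eq_ofReal_sup _).symm

lemma lint_negpart (Z : ℝ → ℝ) (hZ : Measurable Z) (s : ℝ) :
    ∫⁻ τ in Ioo (0:ℝ) 1, ENNReal.ofReal (s - quant Z τ) =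
      ∫⁻ ω, ENNReal.ofReal (s - Z ω) ∂stdP := by
  have hmq : AEMeasurable (fun τ => (s - quant Z τ) ⊔ 0) (volume.restrict (Ioo (0:ℝ) 1)) :=
    ((aemeasurable_const.sub (quant_aemeasurable Z hZ)).sup aemeasurable_const)
  have hmz : AEMeasurable (fun ω => (s - Z ω) ⊔ 0) stdP :=
    ((measurable_const.sub hZ).sup measurable_const).aemeasurable
  calc ∫⁻ τ in Ioo (0:ℝ) 1, ENNReal.ofReal (s - quant Z τ)
      = ∫⁻ τ in Ioo (0:ℝ) 1, ENNReal.ofReal ((s - quant Z τ) ⊔ 0) := by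
        exact lintegral_congr fun τ => ofReal_eq_ofReal_sup _
    _ = ∫⁻ v in Ioi (0:ℝ), volume.restrict (Ioo (0:ℝ) 1) {τ | v < (s - quant Z τ) ⊔ 0} := by
        exact lintegral_eq_lintegral_meas_lt _ (ae_of_all _ fun τ => le_sup_right) hmq
    _ = ∫⁻ v in Ioi (0:ℝ), stdP {ω | v < (s - Z ω) ⊔ 0} := by
        apply setLIntegral_congr_fun measurableSet_Ioi
        intro v hv
        have hv0 : (0:ℝ) < v := hv
        have h1 : {τ : ℝ | v < (s - quant Z τ) ⊔ 0} = {τ | quant Z τ < s - v} := by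
          ext τ
          simp only [mem_setOf_eq, lt_sup_iff]
          constructor
          · rintro (h | h)
            · linarith
            · linarith
          · intro h; left; linarith
        have h2 : {ω : ℝ | v < (s - Z ω) ⊔ 0} = {ω | Z ω < s - v} := by
          ext ω
          simp only [mem_setOf_eq, lt_sup_iff]
          constructor
          · rintro (h | h)
            · linarith
            · linarith
          · intro h; left; linarith
        beta_reduce
        rw [h1, h2, measure_quant_lt Z hZ]
    _ = ∫⁻ ω, ENNReal.ofReal ((s - Z ω) ⊔ 0) ∂stdP := by
        exact (lintegral_eq_lintegral_meas_lt _ (ae_of_all _ fun ω => le_sup_right) hmz).symm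
    _ = ∫⁻ ω, ENNReal.ofReal (s - Z ω) ∂stdP := by
        exact lintegral_congr fun ω => (ofReal_eq_ofReal_sup _).symm

lemma integrableOn_quant (Z : ℝ → ℝ) (hZ : Measurable Z) (hZi : Integrable Z stdP) :
    IntegrableOn (quant Z) (Ioo (0:ℝ) 1) volume := by
  constructor
  · exact (quant_aemeasurable Z hZ).aestronglyMeasurable
  · rw [hasFiniteIntegral_iff_norm]
    have hnorm : ∀ x : ℝ, ENNReal.ofReal ‖x‖ = ENNReal.ofReal x + ENNReal.ofReal (-x) := by
      intro x
      rcases le_total 0 x with h | h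
      · rw [Real.norm_of_nonneg h, ENNReal.ofReal_eq_zero.2 (by linarith : -x ≤ 0), add_zero]
      · rw [Real.norm_of_nonpos h, ENNReal.ofReal_eq_zero.2 h, zero_add]
    calc ∫⁻ τ in Ioo (0:ℝ) 1, ENNReal.ofReal ‖quant Z τ‖
        = ∫⁻ τ in Ioo (0:ℝ) 1,
            (ENNReal.ofReal (quant Z τ - 0) + ENNReal.ofReal (0 - quant Z τ)) := by
          apply lintegral_congr
          intro τ
          rw [sub_zero, zero_sub, hnorm]
      _ = (∫⁻ τ in Ioo (0:ℝ) 1, ENNReal.ofReal (quant Z τ - 0)) +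
            ∫⁻ τ in Ioo (0:ℝ) 1, ENNReal.ofReal (0 - quant Z τ) := by
          apply lintegral_add_left'
          exact ((quant_aemeasurable Z hZ).sub aemeasurable_const).ennreal_ofReal
      _ = (∫⁻ ω, ENNReal.ofReal (Z ω - 0) ∂stdP) +
            ∫⁻ ω, ENNReal.ofReal (0 - Z ω) ∂stdP := by
          rw [lint_pospart Z hZ 0, lint_negpart Z hZ 0]
      _ < ⊤ := by
          apply ENNReal.add_lt_top.2
          constructor
          · apply lt_of_le_of_lt _ hZi.2
            apply lintegral_mono
            intro ω
            simp only
            rw [← ofReal_norm]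
            apply ENNReal.ofReal_le_ofReal
            rw [sub_zero, Real.norm_eq_abs]
            exact le_abs_self _
          · apply lt_of_le_of_lt _ hZi.2
            apply lintegral_mono
            intro ω
            simp only
            rw [← ofReal_norm]
            apply ENNReal.ofReal_le_ofReal
            rw [zero_sub, Real.norm_eq_abs]
            exact neg_le_abs _


lemma integrableOn_pospart_quant (Z : ℝ → ℝ) (hZ : Measurable Z) (hZi : Integrable Z stdP)
    {s : Set ℝ} (hs : s ⊆ Ioo (0:ℝ) 1) (c : ℝ) :
    IntegrableOn (fun τ => (quant Z τ - c) ⊔ 0) s volume := by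
  apply IntegrableOn.mono_set _ hs
  exact (((integrableOn_quant Z hZ hZi).sub ((integrableOn_const (by
    rw [Real.volume_Ioo]; exact ENNReal.ofReal_ne_top)))).pos_part)

lemma integral_pospart_eq (Z : ℝ → ℝ) (hZ : Measurable Z) (hZi : Integrable Z stdP) (s : ℝ) :
    ∫ τ in Ioo (0:ℝ) 1, ((quant Z τ - s) ⊔ 0) = ∫ ω, ((Z ω - s) ⊔ 0) ∂stdP := by
  have hmq : AEMeasurable (fun τ => (quant Z τ - s) ⊔ 0) (volume.restrict (Ioo (0:ℝ) 1)) :=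
    ((quant_aemeasurable Z hZ).sub aemeasurable_const).sup aemeasurable_const
  have hmz : AEMeasurable (fun ω => (Z ω - s) ⊔ 0) stdP :=
    ((hZ.sub measurable_const).sup measurable_const).aemeasurable
  have e1 := integral_eq_lintegral_of_nonneg_ae (μ := volume.restrict (Ioo (0:ℝ) 1))
    (f := fun τ => (quant Z τ - s) ⊔ 0) (ae_of_all _ fun τ => le_sup_right)
    hmq.aestronglyMeasurable
  have e2 := integral_eq_lintegral_of_nonneg_ae (μ := stdP)
    (f := fun ω => (Z ω - s) ⊔ 0) (ae_of_all _ fun ω => le_sup_right)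
    hmz.aestronglyMeasurable
  rw [e1, e2]
  congr 1
  calc ∫⁻ τ in Ioo (0:ℝ) 1, ENNReal.ofReal ((quant Z τ - s) ⊔ 0)
      = ∫⁻ τ in Ioo (0:ℝ) 1, ENNReal.ofReal (quant Z τ - s) :=
        lintegral_congr fun τ => (ofReal_eq_ofReal_sup _).symm
    _ = ∫⁻ ω, ENNReal.ofReal (Z ω - s) ∂stdP := lint_pospart Z hZ s
    _ = ∫⁻ ω, ENNReal.ofReal ((Z ω - s) ⊔ 0) ∂stdP :=
        lintegral_congr fun ω => ofReal_eq_ofReal_sup _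

lemma integral_quant_eq (Z : ℝ → ℝ) (hZ : Measurable Z) (hZi : Integrable Z stdP) :
    ∫ τ in Ioo (0:ℝ) 1, quant Z τ = ∫ ω, Z ω ∂stdP := by
  rw [integral_eq_lintegral_pos_part_sub_lintegral_neg_part (integrableOn_quant Z hZ hZi),
    integral_eq_lintegral_pos_part_sub_lintegral_neg_part hZi]
  congr 1
  · congr 1
    have h1 : ∀ τ : ℝ, ENNReal.ofReal (quant Z τ) = ENNReal.ofReal (quant Z τ - 0) := by
      intro τ; rw [sub_zero]
    have h2 : ∀ ω : ℝ, ENNReal.ofReal (Z ω) = ENNReal.ofReal (Z ω - 0) := by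
      intro ω; rw [sub_zero]
    calc ∫⁻ τ in Ioo (0:ℝ) 1, ENNReal.ofReal (quant Z τ)
        = ∫⁻ τ in Ioo (0:ℝ) 1, ENNReal.ofReal (quant Z τ - 0) := lintegral_congr fun τ => h1 τ
      _ = ∫⁻ ω, ENNReal.ofReal (Z ω - 0) ∂stdP := lint_pospart Z hZ 0
      _ = ∫⁻ ω, ENNReal.ofReal (Z ω) ∂stdP := lintegral_congr fun ω => (h2 ω).symm
  · congr 1
    calc ∫⁻ τ in Ioo (0:ℝ) 1, ENNReal.ofReal (-quant Z τ)
        = ∫⁻ τ in Ioo (0:ℝ) 1, ENNReal.ofReal (0 - quant Z τ) := by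
          apply lintegral_congr; intro τ; rw [zero_sub]
      _ = ∫⁻ ω, ENNReal.ofReal (0 - Z ω) ∂stdP := lint_negpart Z hZ 0
      _ = ∫⁻ ω, ENNReal.ofReal (-Z ω) ∂stdP := by
          apply lintegral_congr; intro ω; rw [zero_sub]

lemma integrableOn_quant_Ioo (Z : ℝ → ℝ) (hZ : Measurable Z) (hZi : Integrable Z stdP)
    {α : ℝ} (hα : 0 ≤ α) : IntegrableOn (quant Z) (Ioo α 1) volume :=
  (integrableOn_quant Z hZ hZi).mono_set (Ioo_subset_Ioo_left hα)

lemma Tl_eq_Ioo (Z : ℝ → ℝ) (α : ℝ) :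
    ∫ τ in Ioc α 1, quant Z τ = ∫ τ in Ioo α 1, quant Z τ := by
  rw [← Measure.restrict_congr_set Ioo_ae_eq_Ioc]

lemma Tl_le (Z : ℝ → ℝ) (hZ : Measurable Z) (hZi : Integrable Z stdP)
    {α : ℝ} (hα : α ∈ Ico (0:ℝ) 1) (s : ℝ) :
    ∫ τ in Ioc α 1, quant Z τ ≤ (1-α) * s + ∫ ω, ((Z ω - s) ⊔ 0) ∂stdP := by
  rw [Tl_eq_Ioo]
  have hvol : (volume (Ioo α 1)).toReal = 1 - α := by
    rw [Real.volume_Ioo, ENNReal.toReal_ofReal (by linarith [hα.2] : (0:ℝ) ≤ 1 - α)]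
  have hconst : IntegrableOn (fun _ : ℝ => s) (Ioo α 1) volume :=
    (integrableOn_const (by rw [Real.volume_Ioo]; exact ENNReal.ofReal_ne_top))
  have hpos : IntegrableOn (fun τ => (quant Z τ - s) ⊔ 0) (Ioo α 1) volume :=
    integrableOn_pospart_quant Z hZ hZi (Ioo_subset_Ioo_left hα.1) s
  have hsum : IntegrableOn (fun τ => s + ((quant Z τ - s) ⊔ 0)) (Ioo α 1) volume :=
    hconst.add hpos
  calc ∫ τ in Ioo α 1, quant Z τ
      ≤ ∫ τ in Ioo α 1, (s + ((quant Z τ - s) ⊔ 0)) := by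
        apply setIntegral_mono_on (integrableOn_quant_Ioo Z hZ hZi hα.1)
          hsum measurableSet_Ioo
        intro τ _
        have := le_sup_left (a := quant Z τ - s) (b := (0:ℝ))
        linarith
    _ = (1-α) * s + ∫ τ in Ioo α 1, ((quant Z τ - s) ⊔ 0) := by
        rw [integral_add hconst hpos, setIntegral_const, measureReal_def, hvol, smul_eq_mul]
    _ ≤ (1-α) * s + ∫ τ in Ioo (0:ℝ) 1, ((quant Z τ - s) ⊔ 0) := by
        apply add_le_add_right
        apply setIntegral_mono_set (integrableOn_pospart_quant Z hZ hZi (subset_refl _) s)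
          (ae_of_all _ fun τ => le_sup_right)
          (HasSubset.Subset.eventuallyLE (Ioo_subset_Ioo_left hα.1))
    _ = (1-α) * s + ∫ ω, ((Z ω - s) ⊔ 0) ∂stdP := by
        rw [integral_pospart_eq Z hZ hZi s]

lemma Tl_ge (Z : ℝ → ℝ) (hZ : Measurable Z) (hZi : Integrable Z stdP)
    {α : ℝ} (hα : α ∈ Ioo (0:ℝ) 1) :
    (1-α) * (quant Z α) + ∫ ω, ((Z ω - quant Z α) ⊔ 0) ∂stdP
      ≤ ∫ τ in Ioc α 1, quant Z τ := by
  set q := quant Z α with hq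
  have hvol : (volume (Ioo α 1)).toReal = 1 - α := by
    rw [Real.volume_Ioo, ENNReal.toReal_ofReal (by linarith [hα.2] : (0:ℝ) ≤ 1 - α)]
  have hsplit : Ioo (0:ℝ) 1 = Ioo 0 α ∪ Ico α 1 := by
    ext x
    simp only [mem_Ioo, mem_union, mem_Ico]
    constructor
    · rintro ⟨h0, h1⟩
      rcases lt_or_ge x α with h | h
      · exact Or.inl ⟨h0, h⟩
      · exact Or.inr ⟨h, h1⟩
    · rintro (⟨h0, h1⟩ | ⟨h0, h1⟩)
      · exact ⟨h0, h1.trans hα.2⟩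
      · exact ⟨hα.1.trans_le h0, h1⟩
  have hdisj : Disjoint (Ioo (0:ℝ) α) (Ico α 1) :=
    disjoint_left.2 fun x hx1 hx2 => absurd hx2.1 (not_le.2 hx1.2)
  have hint1 : IntegrableOn (fun τ => (quant Z τ - q) ⊔ 0) (Ioo (0:ℝ) α) volume :=
    integrableOn_pospart_quant Z hZ hZi (Ioo_subset_Ioo le_rfl hα.2.le) q
  have hint2 : IntegrableOn (fun τ => (quant Z τ - q) ⊔ 0) (Ico α 1) volume := by
    rw [IntegrableOn, ← Measure.restrict_congr_set Ioo_ae_eq_Ico]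
    exact integrableOn_pospart_quant Z hZ hZi (Ioo_subset_Ioo_left hα.1.le) q
  have step1 : ∫ τ in Ioo (0:ℝ) 1, ((quant Z τ - q) ⊔ 0)
      = ∫ τ in Ioo α 1, ((quant Z τ - q) ⊔ 0) := by
    rw [hsplit, setIntegral_union hdisj measurableSet_Ico hint1 hint2]
    have hzero : ∫ τ in Ioo (0:ℝ) α, ((quant Z τ - q) ⊔ 0) = 0 := by
      rw [setIntegral_congr_fun measurableSet_Ioo (g := fun _ => (0:ℝ))]
      · exact integral_zero _ _
      · intro τ hτ
        have hτm : τ ∈ Ioo (0:ℝ) 1 := ⟨hτ.1, hτ.2.trans hα.2⟩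
        have : quant Z τ ≤ q := quant_monotoneOn Z hZ hτm hα hτ.2.le
        simp only
        rw [sup_eq_right.2 (by linarith : quant Z τ - q ≤ 0)]
    rw [hzero, zero_add, ← Measure.restrict_congr_set Ioo_ae_eq_Ico]
  have step2 : ∫ τ in Ioo α 1, ((quant Z τ - q) ⊔ 0) = ∫ τ in Ioo α 1, (quant Z τ - q) := by
    apply setIntegral_congr_fun measurableSet_Ioo
    intro τ hτ
    have hτm : τ ∈ Ioo (0:ℝ) 1 := ⟨hα.1.trans hτ.1, hτ.2⟩
    have : q ≤ quant Z τ := quant_monotoneOn Z hZ hα hτm hτ.1.le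
    simp only
    rw [sup_eq_left.2 (by linarith : (0:ℝ) ≤ quant Z τ - q)]
  have hconstq : IntegrableOn (fun _ : ℝ => q) (Ioo α 1) volume :=
    (integrableOn_const (by rw [Real.volume_Ioo]; exact ENNReal.ofReal_ne_top))
  have step3 : ∫ τ in Ioo α 1, (quant Z τ - q)
      = (∫ τ in Ioo α 1, quant Z τ) - (1-α) * q := by
    rw [integral_sub (integrableOn_quant_Ioo Z hZ hZi hα.1.le) hconstq,
      setIntegral_const, measureReal_def, hvol, smul_eq_mul]
  rw [Tl_eq_Ioo, ← integral_pospart_eq Z hZ hZi q, step1, step2, step3]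
  linarith

lemma Tl_convex (Z Z' : ℝ → ℝ) (hZ : Measurable Z) (hZ' : Measurable Z')
    (hZi : Integrable Z stdP) (hZ'i : Integrable Z' stdP)
    {t α : ℝ} (ht : t ∈ Icc (0:ℝ) 1) (hα : α ∈ Ico (0:ℝ) 1) :
    ∫ τ in Ioc α 1, quant (fun ω => t * Z ω + (1-t) * Z' ω) τ ≤
      t * (∫ τ in Ioc α 1, quant Z τ) + (1-t) * ∫ τ in Ioc α 1, quant Z' τ := by
  set W : ℝ → ℝ := fun ω => t * Z ω + (1-t) * Z' ω with hW
  have hWm : Measurable W := ((hZ.const_mul t).add (hZ'.const_mul (1-t)))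
  have hWi : Integrable W stdP := (hZi.const_mul t).add (hZ'i.const_mul (1-t))
  rcases eq_or_lt_of_le hα.1 with h0 | h0
  · -- α = 0 : everything is the mean
    have hα0 : α = 0 := h0.symm
    subst hα0
    have e1 : ∫ τ in Ioc (0:ℝ) 1, quant W τ = ∫ ω, W ω ∂stdP := by
      rw [Tl_eq_Ioo]; exact integral_quant_eq W hWm hWi
    have e2 : ∫ τ in Ioc (0:ℝ) 1, quant Z τ = ∫ ω, Z ω ∂stdP := by
      rw [Tl_eq_Ioo]; exact integral_quant_eq Z hZ hZi
    have e3 : ∫ τ in Ioc (0:ℝ) 1, quant Z' τ = ∫ ω, Z' ω ∂stdP := by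
      rw [Tl_eq_Ioo]; exact integral_quant_eq Z' hZ' hZ'i
    rw [e1, e2, e3, hW]
    rw [integral_add (hZi.const_mul t) (hZ'i.const_mul (1-t)),
      integral_const_mul, integral_const_mul]
  · -- 0 < α < 1
    have hαm : α ∈ Ioo (0:ℝ) 1 := ⟨h0, hα.2⟩
    set s₁ := quant Z α with hs₁
    set s₂ := quant Z' α with hs₂
    set sb := t * s₁ + (1-t) * s₂ with hsb
    have key : ∀ ω, (W ω - sb) ⊔ 0 ≤ t * ((Z ω - s₁) ⊔ 0) + (1-t) * ((Z' ω - s₂) ⊔ 0) := by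
      intro ω
      have h1 : (0:ℝ) ≤ t * ((Z ω - s₁) ⊔ 0) + (1-t) * ((Z' ω - s₂) ⊔ 0) := by
        have := le_sup_right (a := Z ω - s₁) (b := (0:ℝ))
        have := le_sup_right (a := Z' ω - s₂) (b := (0:ℝ))
        have ht1 : 0 ≤ t := ht.1
        have ht2 : 0 ≤ 1 - t := by linarith [ht.2]
        positivity
      have h2 : W ω - sb ≤ t * ((Z ω - s₁) ⊔ 0) + (1-t) * ((Z' ω - s₂) ⊔ 0) := by
        have e : W ω - sb = t * (Z ω - s₁) + (1-t) * (Z' ω - s₂) := by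
          rw [hW, hsb]; ring
        rw [e]
        apply add_le_add
        · exact mul_le_mul_of_nonneg_left le_sup_left ht.1
        · exact mul_le_mul_of_nonneg_left le_sup_left (by linarith [ht.2])
      exact sup_le h2 h1
    have hZp : Integrable (fun ω => (Z ω - s₁) ⊔ 0) stdP :=
      (hZi.sub (integrable_const s₁)).pos_part
    have hZ'p : Integrable (fun ω => (Z' ω - s₂) ⊔ 0) stdP :=
      (hZ'i.sub (integrable_const s₂)).pos_part
    have hWp : Integrable (fun ω => (W ω - sb) ⊔ 0) stdP :=
      (hWi.sub (integrable_const sb)).pos_part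
    calc ∫ τ in Ioc α 1, quant W τ
        ≤ (1-α) * sb + ∫ ω, ((W ω - sb) ⊔ 0) ∂stdP := Tl_le W hWm hWi hα sb
      _ ≤ (1-α) * sb + ∫ ω, (t * ((Z ω - s₁) ⊔ 0) + (1-t) * ((Z' ω - s₂) ⊔ 0)) ∂stdP := by
          apply add_le_add_right
          exact integral_mono hWp ((hZp.const_mul t).add (hZ'p.const_mul (1-t))) key
      _ = t * ((1-α) * s₁ + ∫ ω, ((Z ω - s₁) ⊔ 0) ∂stdP)
            + (1-t) * ((1-α) * s₂ + ∫ ω, ((Z' ω - s₂) ⊔ 0) ∂stdP) := by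
          rw [integral_add (hZp.const_mul t) (hZ'p.const_mul (1-t)),
            integral_const_mul, integral_const_mul, hsb]
          ring
      _ ≤ t * (∫ τ in Ioc α 1, quant Z τ) + (1-t) * ∫ τ in Ioc α 1, quant Z' τ := by
          apply add_le_add
          · exact mul_le_mul_of_nonneg_left (Tl_ge Z hZ hZi hαm) ht.1
          · exact mul_le_mul_of_nonneg_left (Tl_ge Z' hZ' hZ'i hαm) (by linarith [ht.2])


lemma cdf_le_of_ae_le {Z Z' : ℝ → ℝ} (h : ∀ᵐ ω ∂stdP, Z' ω ≤ Z ω) (z : ℝ) :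
    cdf Z z ≤ cdf Z' z := by
  apply ENNReal.toReal_mono (measure_ne_top _ _)
  apply measure_mono_ae
  exact h.mono fun ω hω hmem => le_trans hω hmem

lemma quant_le_quant {Z Z' : ℝ → ℝ} (hZ : Measurable Z) (hZ' : Measurable Z')
    (h : ∀ z, cdf Z z ≤ cdf Z' z) {τ : ℝ} (hτ : τ ∈ Ioo (0:ℝ) 1) :
    quant Z' τ ≤ quant Z τ :=
  csSup_le_csSup (quantSet_bddAbove Z hZ hτ.2) (quantSet_nonempty Z' hZ' hτ.1)
    (fun t (ht : cdf Z' t ≤ τ) => (h t).trans ht)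

lemma cdf_add_const (Z : ℝ → ℝ) (a : ℝ) (t : ℝ) :
    cdf (fun ω => Z ω + a) t = cdf Z (t - a) := by
  have hseteq : {ω : ℝ | Z ω + a ≤ t} = {ω : ℝ | Z ω ≤ t - a} := by
    ext ω
    simp only [mem_setOf_eq]
    constructor <;> intro h <;> linarith
  rw [cdf, cdf, hseteq]

lemma quant_add_const (Z : ℝ → ℝ) (hZ : Measurable Z) (a : ℝ) {τ : ℝ}
    (hτ : τ ∈ Ioo (0:ℝ) 1) :
    quant (fun ω => Z ω + a) τ = quant Z τ + a := by
  have hlub : IsLUB {t : ℝ | cdf Z t ≤ τ} (quant Z τ) :=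
    isLUB_csSup (quantSet_nonempty Z hZ hτ.1) (quantSet_bddAbove Z hZ hτ.2)
  have hset : {t : ℝ | cdf (fun ω => Z ω + a) t ≤ τ} = {t : ℝ | cdf Z (t - a) ≤ τ} := by
    ext t
    rw [mem_setOf_eq, mem_setOf_eq, cdf_add_const]
  have hlub' : IsLUB {t : ℝ | cdf Z (t - a) ≤ τ} (quant Z τ + a) := by
    constructor
    · intro t (ht : cdf Z (t - a) ≤ τ)
      have := hlub.1 ht
      linarith
    · intro b hb
      have : quant Z τ ≤ b - a := by
        apply hlub.2
        intro s (hs : cdf Z s ≤ τ)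
        have : s + a ∈ {t : ℝ | cdf Z (t - a) ≤ τ} := by
          rw [mem_setOf_eq, add_sub_cancel_right]
          exact hs
        have := hb this
        linarith
      linarith
  rw [quant, hset, hlub'.csSup_eq]
  obtain ⟨s, hs⟩ := quantSet_nonempty Z hZ hτ.1
  exact ⟨s + a, by rw [mem_setOf_eq, add_sub_cancel_right]; exact hs⟩

lemma cdf_const_mul (Z : ℝ → ℝ) {c : ℝ} (hc : 0 < c) (t : ℝ) :
    cdf (fun ω => c * Z ω) t = cdf Z (t / c) := by
  have hseteq : {ω : ℝ | c * Z ω ≤ t} = {ω : ℝ | Z ω ≤ t / c} := by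
    ext ω
    simp only [mem_setOf_eq]
    rw [le_div_iff₀ hc, mul_comm]
  rw [cdf, cdf, hseteq]

lemma quant_const_mul (Z : ℝ → ℝ) (hZ : Measurable Z) {c : ℝ} (hc : 0 < c) {τ : ℝ}
    (hτ : τ ∈ Ioo (0:ℝ) 1) :
    quant (fun ω => c * Z ω) τ = c * quant Z τ := by
  have hlub : IsLUB {t : ℝ | cdf Z t ≤ τ} (quant Z τ) :=
    isLUB_csSup (quantSet_nonempty Z hZ hτ.1) (quantSet_bddAbove Z hZ hτ.2)
  have hset : {t : ℝ | cdf (fun ω => c * Z ω) t ≤ τ} = {t : ℝ | cdf Z (t / c) ≤ τ} := by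
    ext t
    rw [mem_setOf_eq, mem_setOf_eq, cdf_const_mul Z hc]
  have hlub' : IsLUB {t : ℝ | cdf Z (t / c) ≤ τ} (c * quant Z τ) := by
    constructor
    · intro t (ht : cdf Z (t / c) ≤ τ)
      have h1 := hlub.1 ht
      rw [div_le_iff₀ hc] at h1
      linarith [h1]
    · intro b hb
      have : quant Z τ ≤ b / c := by
        apply hlub.2
        intro s (hs : cdf Z s ≤ τ)
        have hmem : c * s ∈ {t : ℝ | cdf Z (t / c) ≤ τ} := by
          rw [mem_setOf_eq, mul_div_cancel_left₀ _ (ne_of_gt hc)]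
          exact hs
        have := hb hmem
        rw [le_div_iff₀ hc]
        linarith
      calc c * quant Z τ ≤ c * (b / c) := mul_le_mul_of_nonneg_left this hc.le
        _ = b := by field_simp
  rw [quant, hset, hlub'.csSup_eq]
  obtain ⟨s, hs⟩ := quantSet_nonempty Z hZ hτ.1
  exact ⟨c * s, by rw [mem_setOf_eq, mul_div_cancel_left₀ _ (ne_of_gt hc)]; exact hs⟩

lemma quant_zero_mul (Z : ℝ → ℝ) {τ : ℝ} (hτ : τ ∈ Ioo (0:ℝ) 1) :
    quant (fun ω => 0 * Z ω) τ = 0 := by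
  have hset : {t : ℝ | cdf (fun ω => (0:ℝ) * Z ω) t ≤ τ} = Iio 0 := by
    ext t
    rw [mem_setOf_eq, mem_Iio, cdf]
    rcases le_or_gt 0 t with h | h
    · have : {ω : ℝ | 0 * Z ω ≤ t} = univ := by
        ext ω; simp only [mem_setOf_eq, zero_mul, mem_univ, iff_true]; exact h
      rw [this, measure_univ]
      simp only [ENNReal.toReal_one]
      constructor
      · intro h1; linarith [hτ.2]
      · intro h1; linarith
    · have : {ω : ℝ | 0 * Z ω ≤ t} = ∅ := by
        ext ω; simp only [mem_setOf_eq, zero_mul, mem_empty_iff_false, iff_false, not_le]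
        exact h
      rw [this, measure_empty]
      simp only [ENNReal.toReal_zero]
      constructor
      · intro _; exact h
      · intro _; exact hτ.1.le
  rw [quant, hset, csSup_Iio]


lemma cdfFinW_card {n : ℕ} (Y : Fin n → ℝ) (t : ℝ) :
    cdfFinW (fun _ => (1:ℝ)/n) Y t
      = ((Finset.univ.filter (fun i => Y i ≤ t)).card : ℝ) / n := by
  rw [cdfFinW, Finset.sum_const, nsmul_eq_mul]
  ring

lemma card_filter_comp_perm {n : ℕ} (Y : Fin n → ℝ) (e : Equiv.Perm (Fin n)) (t : ℝ) :
    (Finset.univ.filter (fun i => Y (e i) ≤ t)).card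
      = (Finset.univ.filter (fun i => Y i ≤ t)).card := by
  apply Finset.card_bij (fun i _ => e i)
  · intro a ha
    simp only [Finset.mem_filter, Finset.mem_univ, true_and] at ha ⊢
    exact ha
  · intro a ha b hb hab
    exact e.injective hab
  · intro b hb
    refine ⟨e.symm b, ?_, by simp⟩
    simp only [Finset.mem_filter, Finset.mem_univ, true_and, Equiv.apply_symm_apply] at hb ⊢
    exact hb

lemma card_filter_mono_le {n : ℕ} {g : Fin n → ℝ} (hg : Monotone g) {j : ℕ} (hj : j < n)
    (t : ℝ) :
    (Finset.univ.filter (fun i => g i ≤ t)).card ≤ j ↔ t < g ⟨j, hj⟩ := by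
  constructor
  · intro hcard
    by_contra hc
    push_neg at hc
    have hsub : Finset.Iic (⟨j, hj⟩ : Fin n) ⊆ Finset.univ.filter (fun i => g i ≤ t) := by
      intro i hi
      rw [Finset.mem_Iic] at hi
      simp only [Finset.mem_filter, Finset.mem_univ, true_and]
      exact le_trans (hg hi) hc
    have := Finset.card_le_card hsub
    rw [Fin.card_Iic] at this
    simp only [Fin.val_mk] at this
    omega
  · intro ht
    have hsub : Finset.univ.filter (fun i => g i ≤ t) ⊆ Finset.Iio (⟨j, hj⟩ : Fin n) := by
      intro i hi
      simp only [Finset.mem_filter, Finset.mem_univ, true_and] at hi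
      rw [Finset.mem_Iio]
      by_contra hc
      push_neg at hc
      exact absurd (hg hc) (by linarith)
    have := Finset.card_le_card hsub
    rw [Fin.card_Iio] at this
    simpa using this

lemma quantFin_step {n : ℕ} (hn : 0 < n) (Y : Fin n → ℝ) {j : ℕ} (hj : j < n) {τ : ℝ}
    (h1 : (j:ℝ)/n ≤ τ) (h2 : τ < ((j:ℝ)+1)/n) :
    quantFinW (fun _ => (1:ℝ)/n) Y τ = (Y ∘ Tuple.sort Y) ⟨j, hj⟩ := by
  have hnR : (0:ℝ) < n := by exact_mod_cast hn
  set g : Fin n → ℝ := Y ∘ Tuple.sort Y with hg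
  have hgm : Monotone g := Tuple.monotone_sort Y
  have hset : {t : ℝ | cdfFinW (fun _ => (1:ℝ)/n) Y t ≤ τ} = Iio (g ⟨j, hj⟩) := by
    ext t
    rw [mem_setOf_eq, mem_Iio, cdfFinW_card]
    have hcardeq : (Finset.univ.filter (fun i => Y i ≤ t)).card
        = (Finset.univ.filter (fun i => g i ≤ t)).card := by
      rw [hg]
      exact (card_filter_comp_perm Y (Tuple.sort Y) t).symm
    rw [hcardeq]
    rw [← card_filter_mono_le hgm hj t]
    set c : ℕ := (Finset.univ.filter (fun i => g i ≤ t)).card with hc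
    constructor
    · intro h
      have : (c:ℝ) ≤ τ * n := by
        rw [div_le_iff₀ hnR] at h
        linarith
      have hcj : (c:ℝ) < (j:ℝ) + 1 := lt_of_le_of_lt this ((lt_div_iff₀ hnR).mp h2)
      exact_mod_cast Nat.lt_succ_iff.mp (by exact_mod_cast hcj)
    · intro h
      calc (c:ℝ)/n ≤ (j:ℝ)/n := by
            gcongr <;> exact_mod_cast h
        _ ≤ τ := h1
  rw [quantFinW, hset, csSup_Iio]


/-- sorted values of `Y`, as a `ℕ`-indexed sequence. -/
noncomputable def sortedVal {n : ℕ} (Y : Fin n → ℝ) (j : ℕ) : ℝ :=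
  if h : j < n then (Y ∘ Tuple.sort Y) ⟨j, h⟩ else 0

lemma block_integral_const {a b : ℝ} (hab : a ≤ b) (f : ℝ → ℝ) (c : ℝ)
    (hf : ∀ τ ∈ Ioo a b, f τ = c) :
    IntegrableOn f (Ioc a b) volume ∧ ∫ τ in Ioc a b, f τ = (b - a) * c := by
  have hint : IntegrableOn f (Ioc a b) volume := by
    rw [IntegrableOn, ← Measure.restrict_congr_set Ioo_ae_eq_Ioc]
    apply IntegrableOn.congr_fun _ (fun τ hτ => (hf τ hτ).symm) measurableSet_Ioo
    exact (integrableOn_const (by rw [Real.volume_Ioo]; exact ENNReal.ofReal_ne_top))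
  refine ⟨hint, ?_⟩
  rw [← Measure.restrict_congr_set Ioo_ae_eq_Ioc,
    setIntegral_congr_fun measurableSet_Ioo hf, setIntegral_const, measureReal_def, Real.volume_Ioo,
    ENNReal.toReal_ofReal (by linarith), smul_eq_mul]

lemma blockStep_integral {n : ℕ} (hn : 0 < n) (f : ℝ → ℝ) (g : ℕ → ℝ)
    (hfg : ∀ j : ℕ, j < n → ∀ τ ∈ Ioo ((j:ℝ)/n) (((j:ℝ)+1)/n), f τ = g j) :
    ∀ d k : ℕ, k + d = n →
      IntegrableOn f (Ioc ((k:ℝ)/n) 1) volume ∧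
      ∫ τ in Ioc ((k:ℝ)/n) 1, f τ = ∑ j ∈ Finset.Ico k n, (1/(n:ℝ)) * g j := by
  have hnR : (0:ℝ) < n := by exact_mod_cast hn
  intro d
  induction d with
  | zero =>
    intro k hk
    have hkn : k = n := by omega
    have h1 : ((k:ℝ))/n = 1 := by
      rw [hkn]; field_simp
    rw [h1, Ioc_self, hkn, Finset.Ico_self, Finset.sum_empty]
    constructor
    · exact integrableOn_empty
    · rw [Measure.restrict_empty, integral_zero_measure]
  | succ d ih =>
    intro k hk
    have hkn : k < n := by omega
    obtain ⟨ih_int, ih_val⟩ := ih (k+1) (by omega)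
    have hcast : (((k+1 : ℕ)):ℝ) = (k:ℝ) + 1 := by push_cast; ring
    rw [hcast] at ih_int ih_val
    have hle1 : (k:ℝ)/n ≤ ((k:ℝ)+1)/n := by
      gcongr
      linarith
    have hle2 : ((k:ℝ)+1)/n ≤ 1 := by
      rw [div_le_one hnR]
      have : (k:ℝ) + 1 ≤ (n:ℝ) := by exact_mod_cast hkn
      linarith
    obtain ⟨hbint, hbval⟩ := block_integral_const hle1 f (g k) (hfg k hkn)
    have hsplit : Ioc ((k:ℝ)/n) 1 = Ioc ((k:ℝ)/n) (((k:ℝ)+1)/n) ∪ Ioc (((k:ℝ)+1)/n) 1 :=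
      (Ioc_union_Ioc_eq_Ioc hle1 hle2).symm
    have hdiff : ((k:ℝ)+1)/n - (k:ℝ)/n = 1/n := by
      rw [div_sub_div_same]; ring_nf
    constructor
    · rw [hsplit]
      exact hbint.union ih_int
    · rw [hsplit, setIntegral_union (Set.Ioc_disjoint_Ioc_of_le le_rfl) measurableSet_Ioc hbint ih_int,
        hbval, hdiff, ih_val, ← Finset.insert_Ico_add_one_left_eq_Ico hkn, Finset.sum_insert (by simp)]

lemma quantFin_tail {n : ℕ} (hn : 0 < n) (Y : Fin n → ℝ) (k : ℕ) (hk : k ≤ n) :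
    IntegrableOn (quantFinW (fun _ => (1:ℝ)/n) Y) (Ioc ((k:ℝ)/n) 1) volume ∧
    ∫ τ in Ioc ((k:ℝ)/n) 1, quantFinW (fun _ => (1:ℝ)/n) Y τ
      = ∑ j ∈ Finset.Ico k n, (1/(n:ℝ)) * sortedVal Y j := by
  apply blockStep_integral hn _ _ _ (n - k) k (by omega)
  intro j hj τ hτ
  rw [quantFin_step hn Y hj hτ.1.le hτ.2, sortedVal, dif_pos hj]

lemma avarFin_val {n : ℕ} (hn : 0 < n) (Y : Fin n → ℝ) {k : ℕ} (hkn : k < n) :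
    avarFinW (fun _ => (1:ℝ)/n) Y ((k:ℝ)/n)
      = (1 - (k:ℝ)/n)⁻¹ * ∑ j ∈ Finset.Ico k n, (1/(n:ℝ)) * sortedVal Y j := by
  rw [avarFinW, (quantFin_tail hn Y k hkn.le).2]


lemma abel_sum (f g : ℕ → ℝ) (n : ℕ) (hg : g n = 0) :
    ∑ k ∈ Finset.range n, (f k - (if k = 0 then 0 else f (k-1))) * g k
      = ∑ k ∈ Finset.range n, f k * (g k - g (k+1)) := by
  set h : ℕ → ℝ := fun k => (if k = 0 then 0 else f (k-1)) * g k with hh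
  have h0 : h 0 = 0 := by simp [hh]
  have hn0 : h n = 0 := by simp [hh, hg]
  have key : ∑ k ∈ Finset.range n, h k = ∑ k ∈ Finset.range n, f k * g (k+1) := by
    have e1 : ∑ k ∈ Finset.range (n+1), h k = ∑ k ∈ Finset.range n, h k + h n :=
      Finset.sum_range_succ h n
    have e2 : ∑ k ∈ Finset.range (n+1), h k = ∑ k ∈ Finset.range n, h (k+1) + h 0 :=
      Finset.sum_range_succ' h n
    have e3 : ∑ k ∈ Finset.range n, h (k+1) = ∑ k ∈ Finset.range n, f k * g (k+1) := by
      apply Finset.sum_congr rfl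
      intro k _
      simp [hh]
    rw [hn0, add_zero] at e1
    rw [h0, add_zero, e3] at e2
    rw [e1] at e2
    exact e2
  calc ∑ k ∈ Finset.range n, (f k - (if k = 0 then 0 else f (k-1))) * g k
      = ∑ k ∈ Finset.range n, (f k * g k - h k) := by
        apply Finset.sum_congr rfl
        intro k _
        rw [hh]
        ring
    _ = ∑ k ∈ Finset.range n, f k * g k - ∑ k ∈ Finset.range n, h k :=
        Finset.sum_sub_distrib _ _
    _ = ∑ k ∈ Finset.range n, f k * g k - ∑ k ∈ Finset.range n, f k * g (k+1) := by
        rw [key]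
    _ = ∑ k ∈ Finset.range n, f k * (g k - g (k+1)) := by
        rw [← Finset.sum_sub_distrib]
        apply Finset.sum_congr rfl
        intro k _
        ring

section RhoAux

variable {n : ℕ} (ϱ : (Fin n → ℝ) → ℝ)

/-- The subgradient existence theorem for sublinear functionals on `ℝⁿ`. -/
lemma exists_subgrad (hn : 0 < n)
    (hconv : ∀ Y Y' : Fin n → ℝ, ∀ t : ℝ, t ∈ Icc (0:ℝ) 1 →
      ϱ (fun i => t * Y i + (1 - t) * Y' i) ≤ t * ϱ Y + (1 - t) * ϱ Y')
    (hhom : ∀ Y : Fin n → ℝ, ∀ t : ℝ, 0 ≤ t → ϱ (fun i => t * Y i) = t * ϱ Y)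
    (Y₀ : Fin n → ℝ) :
    ∃ q : Fin n → ℝ, (∀ Y, (∑ i, q i * Y i) ≤ ϱ Y) ∧ (∑ i, q i * Y₀ i) = ϱ Y₀ := by
  have hzero : ϱ (fun _ => (0:ℝ)) = 0 := by
    have := hhom (fun _ => 0) 0 le_rfl
    simpa using this
  have hNhom : ∀ c : ℝ, 0 < c → ∀ x : Fin n → ℝ, ϱ (c • x) = c * ϱ x := by
    intro c hc x
    have : (c • x) = fun i => c * x i := by
      funext i; simp [Pi.smul_apply, smul_eq_mul]
    rw [this]
    exact hhom x c hc.le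
  have hNadd : ∀ x y : Fin n → ℝ, ϱ (x + y) ≤ ϱ x + ϱ y := by
    intro x y
    have hmid := hconv x y (1/2) ⟨by norm_num, by norm_num⟩
    have hrw : (fun i => (1/2 : ℝ) * x i + (1 - 1/2) * y i)
        = fun i => (1/2 : ℝ) * x i + (1/2) * y i := by
      norm_num
    rw [hrw] at hmid
    have h2 : ϱ (fun i => 2 * ((1/2 : ℝ) * x i + (1/2) * y i))
        = 2 * ϱ (fun i => (1/2 : ℝ) * x i + (1/2) * y i) := hhom _ 2 (by norm_num)
    have hxy : (x + y) = fun i => 2 * ((1/2 : ℝ) * x i + (1/2) * y i) := by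
      funext i; simp only [Pi.add_apply]; ring
    rw [hxy, h2]
    linarith
  -- main case : Y₀ ≠ 0
  have main : ∀ Y₀ : Fin n → ℝ, Y₀ ≠ 0 →
      ∃ q : Fin n → ℝ, (∀ Y, (∑ i, q i * Y i) ≤ ϱ Y) ∧ (∑ i, q i * Y₀ i) = ϱ Y₀ := by
    intro Y₀ hY0
    set f := LinearPMap.mkSpanSingleton' (R := ℝ) (σ := RingHom.id ℝ) Y₀ (ϱ Y₀)
      (fun c hc => by
        rcases smul_eq_zero.1 hc with h | h
        · simp [h]
        · exact absurd h hY0) with hf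
    have hfle : ∀ x : f.domain, f x ≤ ϱ x := by
      rintro ⟨x, hx⟩
      obtain ⟨c, hc⟩ := Submodule.mem_span_singleton.1 hx
      subst hc
      have happ : f ⟨c • Y₀, hx⟩ = c * ϱ Y₀ := by
        have := LinearPMap.mkSpanSingleton'_apply (R := ℝ) Y₀ (ϱ Y₀) _ c hx
        simp only [RingHom.id_apply, smul_eq_mul] at this
        exact this
      rw [happ]
      change c * ϱ Y₀ ≤ ϱ (c • Y₀)
      rcases lt_trichotomy c 0 with hcneg | hc0 | hcpos
      · have hsum0 : (c • Y₀ + (-c) • Y₀ : Fin n → ℝ) = fun _ => (0:ℝ) := by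
          funext i; simp only [Pi.add_apply, Pi.smul_apply, smul_eq_mul]; ring
        have := hNadd (c • Y₀) ((-c) • Y₀)
        rw [hsum0, hzero, hNhom (-c) (by linarith) Y₀] at this
        linarith
      · subst hc0
        have h00 : ((0:ℝ) • Y₀ : Fin n → ℝ) = fun _ => (0:ℝ) := by
          funext i; simp
        rw [h00, hzero]
        simp
      · rw [hNhom c hcpos Y₀]
    obtain ⟨g, hg1, hg2⟩ := exists_extension_of_le_sublinear f ϱ hNhom hNadd hfle
    have hgY₀ : g Y₀ = ϱ Y₀ := by
      have hmem : Y₀ ∈ Submodule.span ℝ {Y₀} := Submodule.mem_span_singleton_self Y₀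
      have := hg1 ⟨Y₀, hmem⟩
      rw [this]
      convert LinearPMap.mkSpanSingleton'_apply (R := ℝ) (σ := RingHom.id ℝ) Y₀ (ϱ Y₀)
        (fun c hc => (smul_eq_zero.1 hc).elim (fun h => by simp [h]) (fun h => absurd h hY0)) (1:ℝ)
        (by rw [one_smul]; exact hmem) using 2
      · exact Subtype.ext (one_smul ℝ Y₀).symm
      · simp
    have hrep : ∀ Y : Fin n → ℝ,
        (∑ i, (g fun j => if i = j then (1:ℝ) else 0) * Y i) = g Y := by
      intro Y
      rw [LinearMap.pi_apply_eq_sum_univ g Y]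
      apply Finset.sum_congr rfl
      intro i _
      rw [smul_eq_mul, mul_comm]
    refine ⟨fun i => g fun j => if i = j then (1:ℝ) else 0, ?_, ?_⟩
    · intro Y
      rw [hrep]
      exact hg2 Y
    · rw [hrep, hgY₀]
  by_cases hY0 : Y₀ = 0
  · obtain ⟨q, hq1, _⟩ := main (fun _ => (1:ℝ)) (by
      intro h
      have := congrFun h ⟨0, hn⟩
      simpa using this)
    refine ⟨q, hq1, ?_⟩
    subst hY0
    have : (∑ i, q i * (0 : Fin n → ℝ) i) = 0 := by simp
    rw [this]
    have h0 : (0 : Fin n → ℝ) = fun _ => (0:ℝ) := by funext i; simp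
    rw [h0, hzero]
  · exact main Y₀ hY0

end RhoAux


section RhoAux2

variable {n : ℕ} (ϱ : (Fin n → ℝ) → ℝ)

lemma rho_zero (hhom : ∀ Y : Fin n → ℝ, ∀ t : ℝ, 0 ≤ t → ϱ (fun i => t * Y i) = t * ϱ Y) :
    ϱ (fun _ => (0:ℝ)) = 0 := by
  have := hhom (fun _ => 0) 0 le_rfl
  simpa using this

lemma subgrad_nonneg
    (hmono : ∀ Y Y' : Fin n → ℝ, (∀ i, Y' i ≤ Y i) → ϱ Y' ≤ ϱ Y)
    (hhom : ∀ Y : Fin n → ℝ, ∀ t : ℝ, 0 ≤ t → ϱ (fun i => t * Y i) = t * ϱ Y)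
    {q : Fin n → ℝ} (hq : ∀ Y, (∑ i, q i * Y i) ≤ ϱ Y) (i : Fin n) : 0 ≤ q i := by
  have h1 := hq (fun j => if j = i then (-1:ℝ) else 0)
  have h2 : (∑ j, q j * (if j = i then (-1:ℝ) else 0)) = -q i := by
    rw [Finset.sum_eq_single i]
    · simp
    · intro b _ hb; simp [hb]
    · intro h; exact absurd (Finset.mem_univ i) h
  have h3 : ϱ (fun j => if j = i then (-1:ℝ) else 0) ≤ 0 := by
    have := hmono (fun _ => 0) (fun j => if j = i then (-1:ℝ) else 0)
      (fun j => by by_cases h : j = i <;> simp [h])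
    rw [rho_zero ϱ hhom] at this
    exact this
  rw [h2] at h1
  linarith

lemma subgrad_sum_one
    (htrans : ∀ Y : Fin n → ℝ, ∀ a : ℝ, ϱ (fun i => Y i + a) = ϱ Y + a)
    (hhom : ∀ Y : Fin n → ℝ, ∀ t : ℝ, 0 ≤ t → ϱ (fun i => t * Y i) = t * ϱ Y)
    {q : Fin n → ℝ} (hq : ∀ Y, (∑ i, q i * Y i) ≤ ϱ Y) : (∑ i, q i) = 1 := by
  have hconst : ∀ a : ℝ, ϱ (fun _ => a) = a := by
    intro a
    have h1 := htrans (fun _ => 0) a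
    have h2 : (fun i : Fin n => (fun _ : Fin n => (0:ℝ)) i + a) = fun _ => a := by
      funext i; ring
    rw [h2, rho_zero ϱ hhom, zero_add] at h1
    exact h1
  have hs : ∀ a : ℝ, (∑ i, q i) * a ≤ a := by
    intro a
    have := hq (fun _ => a)
    rw [hconst] at this
    calc (∑ i, q i) * a = ∑ i, q i * a := by rw [Finset.sum_mul]
      _ ≤ a := this
  have hp := hs 1
  have hm := hs (-1)
  rw [mul_one] at hp
  have : -(∑ i, q i) ≤ -1 := by linarith [hm]
  linarith

lemma subgrad_perm
    (hli : ∀ Y : Fin n → ℝ, ∀ e : Equiv.Perm (Fin n), ϱ (Y ∘ e) = ϱ Y)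
    {q : Fin n → ℝ} (hq : ∀ Y, (∑ i, q i * Y i) ≤ ϱ Y) (e : Equiv.Perm (Fin n)) :
    ∀ Y, (∑ i, q (e i) * Y i) ≤ ϱ Y := by
  intro Y
  have hre : ∑ i, q (e i) * Y i = ∑ j, q j * (Y ∘ e.symm) j := by
    rw [← Equiv.sum_comp e (fun j => q j * (Y ∘ e.symm) j)]
    apply Finset.sum_congr rfl
    intro i _
    simp only [Function.comp_apply, Equiv.symm_apply_apply]
  rw [hre]
  calc ∑ j, q j * (Y ∘ e.symm) j ≤ ϱ (Y ∘ e.symm) := hq _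
    _ = ϱ Y := hli Y e.symm

lemma dot_le_sorted_mono (q V : Fin n → ℝ) (hV : Monotone V) :
    (∑ i, q i * V i) ≤ ∑ i, (q ∘ Tuple.sort q) i * V i := by
  have hmq : Monotone (q ∘ Tuple.sort q) := Tuple.monotone_sort q
  have hmv : Monovary V (q ∘ Tuple.sort q) := hV.monovary hmq
  have h1 : ∑ i, q i * V i = ∑ i, V i • (q ∘ Tuple.sort q) ((Tuple.sort q)⁻¹ i) := by
    apply Finset.sum_congr rfl
    intro i _
    have : (q ∘ Tuple.sort q) ((Tuple.sort q)⁻¹ i) = q i := by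
      simp only [Function.comp_apply]
      congr 1
      exact Equiv.apply_symm_apply _ i
    rw [this, smul_eq_mul, mul_comm]
  rw [h1]
  have h2 := hmv.sum_smul_comp_perm_le_sum_smul (σ := (Tuple.sort q)⁻¹)
  calc ∑ i, V i • (q ∘ Tuple.sort q) ((Tuple.sort q)⁻¹ i)
      ≤ ∑ i, V i • (q ∘ Tuple.sort q) i := h2
    _ = ∑ i, (q ∘ Tuple.sort q) i * V i := by
        apply Finset.sum_congr rfl
        intro i _
        rw [smul_eq_mul, mul_comm]

lemma dot_le_sorted_pair (q Y : Fin n → ℝ) :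
    (∑ i, q i * Y i) ≤ ∑ i, (q ∘ Tuple.sort q) i * (Y ∘ Tuple.sort Y) i := by
  set eY := Tuple.sort Y with heY
  have h1 : ∑ i, q i * Y i = ∑ i, (q ∘ eY) i * (Y ∘ eY) i := by
    rw [← Equiv.sum_comp eY (fun i => q i * Y i)]
    simp only [Function.comp_apply]
  rw [h1]
  have h2 := dot_le_sorted_mono (q ∘ eY) (Y ∘ eY) (Tuple.monotone_sort Y)
  calc ∑ i, (q ∘ eY) i * (Y ∘ eY) i
      ≤ ∑ i, ((q ∘ eY) ∘ Tuple.sort (q ∘ eY)) i * (Y ∘ eY) i := h2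
    _ = ∑ i, (q ∘ Tuple.sort q) i * (Y ∘ eY) i := by
        rw [Tuple.comp_perm_comp_sort_eq_comp_sort]

/-- attainment of `ϱ Y` by a *monotone* subgradient against the *sorted* `Y`. -/
lemma exists_mono_subgrad (hn : 0 < n)
    (hconv : ∀ Y Y' : Fin n → ℝ, ∀ t : ℝ, t ∈ Icc (0:ℝ) 1 →
      ϱ (fun i => t * Y i + (1 - t) * Y' i) ≤ t * ϱ Y + (1 - t) * ϱ Y')
    (hhom : ∀ Y : Fin n → ℝ, ∀ t : ℝ, 0 ≤ t → ϱ (fun i => t * Y i) = t * ϱ Y)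
    (hli : ∀ Y : Fin n → ℝ, ∀ e : Equiv.Perm (Fin n), ϱ (Y ∘ e) = ϱ Y)
    (Y : Fin n → ℝ) :
    ∃ q : Fin n → ℝ, (∀ Y', (∑ i, q i * Y' i) ≤ ϱ Y') ∧ Monotone q ∧
      (∑ i, q i * (Y ∘ Tuple.sort Y) i) = ϱ Y := by
  obtain ⟨q₀, hq₀, hq₀Y⟩ := exists_subgrad ϱ hn hconv hhom Y
  refine ⟨q₀ ∘ Tuple.sort q₀, ?_, Tuple.monotone_sort q₀, ?_⟩
  · exact subgrad_perm ϱ hli hq₀ (Tuple.sort q₀)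
  · have hub : (∑ i, (q₀ ∘ Tuple.sort q₀) i * (Y ∘ Tuple.sort Y) i) ≤ ϱ Y := by
      calc (∑ i, (q₀ ∘ Tuple.sort q₀) i * (Y ∘ Tuple.sort Y) i)
          ≤ ϱ (Y ∘ Tuple.sort Y) := subgrad_perm ϱ hli hq₀ (Tuple.sort q₀) _
        _ = ϱ Y := hli Y (Tuple.sort Y)
    have hlb : ϱ Y ≤ ∑ i, (q₀ ∘ Tuple.sort q₀) i * (Y ∘ Tuple.sort Y) i := by
      rw [← hq₀Y]
      exact dot_le_sorted_pair q₀ Y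
    linarith

end RhoAux2


section MuQ

/-- `ℕ`-indexed version of a vector `q`. -/
noncomputable def qn {n : ℕ} (q : Fin n → ℝ) (j : ℕ) : ℝ := if h : j < n then q ⟨j, h⟩ else 0

/-- increments of `q`. -/
noncomputable def qnd {n : ℕ} (q : Fin n → ℝ) (j : ℕ) : ℝ :=
  qn q j - (if j = 0 then 0 else qn q (j-1))

/-- weights of the discrete Kusuoka measure associated with `q`. -/
noncomputable def mWeight (n : ℕ) (q : Fin n → ℝ) (j : ℕ) : ℝ := qnd q j * ((n:ℝ) - j)

/-- the discrete Kusuoka measure associated with `q`. -/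
noncomputable def muOf (n : ℕ) (q : Fin n → ℝ) : Measure ℝ :=
  ∑ j ∈ Finset.range n, ENNReal.ofReal (mWeight n q j) • Measure.dirac ((j:ℝ)/n)

lemma qnd_nonneg {n : ℕ} {q : Fin n → ℝ} (hq0 : ∀ i, 0 ≤ q i) (hqm : Monotone q)
    {j : ℕ} (hj : j < n) : 0 ≤ qnd q j := by
  rw [qnd, qn]
  rcases Nat.eq_zero_or_pos j with h0 | hpos
  · subst h0
    rw [qn, dif_pos hj]
    norm_num
    exact hq0 _
  · rw [if_neg (by omega), qn, dif_pos hj, dif_pos (by omega : j - 1 < n)]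
    apply sub_nonneg.2
    apply hqm
    simp only [Fin.mk_le_mk]
    omega

lemma mWeight_nonneg {n : ℕ} {q : Fin n → ℝ} (hq0 : ∀ i, 0 ≤ q i) (hqm : Monotone q)
    {j : ℕ} (hj : j < n) : 0 ≤ mWeight n q j := by
  apply mul_nonneg (qnd_nonneg hq0 hqm hj)
  have : (j:ℝ) < n := by exact_mod_cast hj
  linarith

lemma mWeight_sum {n : ℕ} (q : Fin n → ℝ) :
    ∑ j ∈ Finset.range n, mWeight n q j = ∑ i, q i := by
  have habel := abel_sum (qn q) (fun j => (n:ℝ) - j) n (by simp)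
  calc ∑ j ∈ Finset.range n, mWeight n q j
      = ∑ j ∈ Finset.range n, (qn q j - (if j = 0 then 0 else qn q (j-1))) * ((n:ℝ) - j) := by
        apply Finset.sum_congr rfl
        intro j _
        rw [mWeight, qnd]
    _ = ∑ j ∈ Finset.range n, qn q j * (((n:ℝ) - j) - ((n:ℝ) - (j+1 : ℕ))) := habel
    _ = ∑ j ∈ Finset.range n, qn q j := by
        apply Finset.sum_congr rfl
        intro j _
        have : ((n:ℝ) - j) - ((n:ℝ) - (j+1 : ℕ)) = 1 := by push_cast; ring
        rw [this, mul_one]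
    _ = ∑ i : Fin n, qn q i := (Fin.sum_univ_eq_sum_range (qn q) n).symm
    _ = ∑ i, q i := by
        apply Finset.sum_congr rfl
        intro i _
        rw [qn, dif_pos i.isLt]

lemma muOf_isP01 {n : ℕ} (hn : 0 < n) {q : Fin n → ℝ} (hq0 : ∀ i, 0 ≤ q i)
    (hqm : Monotone q) (hq1 : (∑ i, q i) = 1) : IsP01 (muOf n q) := by
  have happly : ∀ s : Set ℝ, MeasurableSet s →
      muOf n q s = ∑ j ∈ Finset.range n,
        ENNReal.ofReal (mWeight n q j) * (Measure.dirac ((j:ℝ)/n)) s := by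
    intro s hs
    rw [muOf, Measure.finset_sum_apply]
    apply Finset.sum_congr rfl
    intro j _
    rw [Measure.smul_apply, smul_eq_mul]
  refine ⟨⟨?_⟩, ?_, ?_⟩
  · rw [happly univ MeasurableSet.univ]
    have : ∀ j ∈ Finset.range n, ENNReal.ofReal (mWeight n q j) * (Measure.dirac ((j:ℝ)/n)) univ
        = ENNReal.ofReal (mWeight n q j) := by
      intro j _
      rw [measure_univ, mul_one]
    rw [Finset.sum_congr rfl this, ← ENNReal.ofReal_sum_of_nonneg
      (fun j hj => mWeight_nonneg hq0 hqm (Finset.mem_range.1 hj)), mWeight_sum, hq1,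
      ENNReal.ofReal_one]
  · rw [happly _ measurableSet_Icc.compl]
    apply Finset.sum_eq_zero
    intro j hj
    have hjn : j < n := Finset.mem_range.1 hj
    have hmem : (j:ℝ)/n ∈ Icc (0:ℝ) 1 := by
      constructor
      · positivity
      · rw [div_le_one (by exact_mod_cast hn : (0:ℝ) < n)]
        exact_mod_cast hjn.le
    rw [Measure.dirac_apply' _ measurableSet_Icc.compl, indicator_of_notMem (by
      simp only [mem_compl_iff, not_not]; exact hmem), mul_zero]
  · rw [happly _ (measurableSet_singleton 1)]
    apply Finset.sum_eq_zero
    intro j hj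
    have hjn : j < n := Finset.mem_range.1 hj
    have hne : (j:ℝ)/n ≠ 1 := by
      have : (j:ℝ)/n < 1 := by
        rw [div_lt_one (by exact_mod_cast hn : (0:ℝ) < n)]
        exact_mod_cast hjn
      linarith
    rw [Measure.dirac_apply' _ (measurableSet_singleton 1), indicator_of_notMem (by
      simpa using hne), mul_zero]

lemma integrable_dirac' {f : ℝ → ℝ} (a : ℝ) : Integrable f (Measure.dirac a) := by
  constructor
  · apply aestronglyMeasurable_const.congr
    rw [MeasureTheory.ae_dirac_eq]
    exact Filter.eventually_pure.2 rfl
  · rw [HasFiniteIntegral]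
    rw [lintegral_dirac]
    exact ENNReal.coe_lt_top

lemma integral_muOf {n : ℕ} {q : Fin n → ℝ} (hq0 : ∀ i, 0 ≤ q i) (hqm : Monotone q)
    (f : ℝ → ℝ) :
    ∫ α, f α ∂(muOf n q) = ∑ j ∈ Finset.range n, mWeight n q j * f ((j:ℝ)/n) := by
  rw [muOf, integral_finset_sum_measure
    (μ := fun j : ℕ => ENNReal.ofReal (mWeight n q j) • Measure.dirac ((j:ℝ)/n))
    (fun j _ => (integrable_dirac' ((j:ℝ)/n)).smul_measure ENNReal.ofReal_ne_top)]
  apply Finset.sum_congr rfl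
  intro j hj
  rw [integral_smul_measure, integral_dirac, smul_eq_mul,
    ENNReal.toReal_ofReal (mWeight_nonneg hq0 hqm (Finset.mem_range.1 hj))]

lemma kusuoka_integral_muOf {n : ℕ} (hn : 0 < n) (Y : Fin n → ℝ) {q : Fin n → ℝ}
    (hq0 : ∀ i, 0 ≤ q i) (hqm : Monotone q) :
    ∫ α, avarFinW (fun _ => (1:ℝ)/n) Y α ∂(muOf n q)
      = ∑ i, q i * (Y ∘ Tuple.sort Y) i := by
  have hnR : (0:ℝ) < n := by exact_mod_cast hn
  rw [integral_muOf hq0 hqm]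
  set g : ℕ → ℝ := fun j => (n:ℝ) * ∑ i ∈ Finset.Ico j n, (1/(n:ℝ)) * sortedVal Y i with hgdef
  have hterm : ∀ j ∈ Finset.range n,
      mWeight n q j * avarFinW (fun _ => (1:ℝ)/n) Y ((j:ℝ)/n) = qnd q j * g j := by
    intro j hj
    have hjn : j < n := Finset.mem_range.1 hj
    rw [avarFin_val hn Y hjn, mWeight]
    have hne : 1 - (j:ℝ)/n ≠ 0 := by
      have : (j:ℝ)/n < 1 := by
        rw [div_lt_one hnR]; exact_mod_cast hjn
      linarith
    have hfac : ((n:ℝ) - j) * (1 - (j:ℝ)/n)⁻¹ = n := by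
      have h1 : (n:ℝ) - j = (1 - (j:ℝ)/n) * n := by field_simp
      rw [h1, mul_comm (1 - (j:ℝ)/n) (n:ℝ), mul_assoc, mul_inv_cancel₀ hne, mul_one]
    rw [hgdef]
    simp only
    calc qnd q j * ((n:ℝ) - j) * ((1 - (j:ℝ)/n)⁻¹ * ∑ i ∈ Finset.Ico j n, (1/(n:ℝ)) * sortedVal Y i)
        = qnd q j * (((n:ℝ) - j) * (1 - (j:ℝ)/n)⁻¹) * ∑ i ∈ Finset.Ico j n, (1/(n:ℝ)) * sortedVal Y i := by
          ring
      _ = qnd q j * ((n:ℝ) * ∑ i ∈ Finset.Ico j n, (1/(n:ℝ)) * sortedVal Y i) := by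
          rw [hfac]; ring
  rw [Finset.sum_congr rfl hterm]
  have hg_n : g n = 0 := by rw [hgdef]; simp
  have habel := abel_sum (qn q) g n hg_n
  have hqnd_eq : ∀ j, qnd q j = qn q j - (if j = 0 then 0 else qn q (j-1)) := fun j => rfl
  calc ∑ j ∈ Finset.range n, qnd q j * g j
      = ∑ j ∈ Finset.range n, (qn q j - (if j = 0 then 0 else qn q (j-1))) * g j := by
        apply Finset.sum_congr rfl
        intro j _
        rw [hqnd_eq]
    _ = ∑ j ∈ Finset.range n, qn q j * (g j - g (j+1)) := habel
    _ = ∑ j ∈ Finset.range n, qn q j * sortedVal Y j := by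
        apply Finset.sum_congr rfl
        intro j hj
        have hjn : j < n := Finset.mem_range.1 hj
        have hsplit : g j - g (j+1) = sortedVal Y j := by
          rw [hgdef]
          simp only
          rw [← Finset.insert_Ico_add_one_left_eq_Ico hjn, Finset.sum_insert (by simp)]
          field_simp
          ring
        rw [hsplit]
    _ = ∑ i : Fin n, qn q i * sortedVal Y i :=
        (Fin.sum_univ_eq_sum_range (fun j => qn q j * sortedVal Y j) n).symm
    _ = ∑ i, q i * (Y ∘ Tuple.sort Y) i := by
        apply Finset.sum_congr rfl
        intro i _
        rw [qn, sortedVal, dif_pos i.isLt, dif_pos i.isLt]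

end MuQ


section YhatSec

/-- block averages of the quantile function: the canonical discretization. -/
noncomputable def Yhat (n : ℕ) (Z : ℝ → ℝ) : Fin n → ℝ :=
  fun k => (n:ℝ) * ∫ τ in Ioc (((k:ℕ):ℝ)/n) ((((k:ℕ):ℝ)+1)/n), quant Z τ

lemma Yhat_congr {n : ℕ} {Z Z' : ℝ → ℝ} (h : cdf Z = cdf Z') : Yhat n Z = Yhat n Z' := by
  funext k
  rw [Yhat, Yhat, quant_congr h]

lemma exists_rep (Z : ℝ → ℝ) (hZ : MemLp Z 1 stdP) :
    ∃ Z₀ : ℝ → ℝ, Measurable Z₀ ∧ Integrable Z₀ stdP ∧ cdf Z = cdf Z₀ ∧ Z =ᵐ[stdP] Z₀ := by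
  refine ⟨hZ.1.mk Z, hZ.1.stronglyMeasurable_mk.measurable,
    (memLp_one_iff_integrable.1 hZ).congr hZ.1.ae_eq_mk, cdf_congr hZ.1.ae_eq_mk,
    hZ.1.ae_eq_mk⟩

variable {n : ℕ}

lemma block_bounds (hn : 0 < n) {k : ℕ} (hk : k < n) :
    (0:ℝ) ≤ (k:ℝ)/n ∧ (k:ℝ)/n < 1 ∧ (k:ℝ)/n ≤ ((k:ℝ)+1)/n ∧ ((k:ℝ)+1)/n ≤ 1 := by
  have hnR : (0:ℝ) < n := by exact_mod_cast hn
  refine ⟨by positivity, ?_, by gcongr; linarith, ?_⟩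
  · rw [div_lt_one hnR]; exact_mod_cast hk
  · rw [div_le_one hnR]
    have : (k:ℝ) + 1 ≤ (n:ℝ) := by exact_mod_cast hk
    linarith

lemma integrableOn_quant_Ioc (Z : ℝ → ℝ) (hZ : Measurable Z) (hZi : Integrable Z stdP)
    {α : ℝ} (hα : 0 ≤ α) : IntegrableOn (quant Z) (Ioc α 1) volume := by
  rw [IntegrableOn, ← Measure.restrict_congr_set Ioo_ae_eq_Ioc]
  exact integrableOn_quant_Ioo Z hZ hZi hα

lemma integrableOn_quant_block (Z : ℝ → ℝ) (hZ : Measurable Z) (hZi : Integrable Z stdP)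
    {a b : ℝ} (ha : 0 ≤ a) (hb : b ≤ 1) : IntegrableOn (quant Z) (Ioc a b) volume :=
  (integrableOn_quant_Ioc Z hZ hZi ha).mono_set (Ioc_subset_Ioc le_rfl hb)

/-- tail decomposition: `Tl k = block k + Tl (k+1)`. -/
lemma tail_split (Z : ℝ → ℝ) (hZ : Measurable Z) (hZi : Integrable Z stdP)
    (hn : 0 < n) {k : ℕ} (hk : k < n) :
    ∫ τ in Ioc ((k:ℝ)/n) 1, quant Z τ
      = (∫ τ in Ioc ((k:ℝ)/n) (((k:ℝ)+1)/n), quant Z τ)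
        + ∫ τ in Ioc (((k:ℝ)+1)/n) 1, quant Z τ := by
  obtain ⟨h0, h1, h2, h3⟩ := block_bounds hn hk
  rw [← Ioc_union_Ioc_eq_Ioc h2 h3]
  exact setIntegral_union (Set.Ioc_disjoint_Ioc_of_le le_rfl) measurableSet_Ioc
    (integrableOn_quant_block Z hZ hZi h0 h3)
    (integrableOn_quant_block Z hZ hZi (le_trans h0 h2) le_rfl)

/-- Abel: pairing of `q` against `Yhat` as a combination of tail integrals. -/
lemma pair_Yhat (hn : 0 < n) (q : Fin n → ℝ) (Z : ℝ → ℝ) (hZ : Measurable Z)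
    (hZi : Integrable Z stdP) :
    (∑ i, q i * Yhat n Z i)
      = ∑ j ∈ Finset.range n, qnd q j * ((n:ℝ) * ∫ τ in Ioc ((j:ℝ)/n) 1, quant Z τ) := by
  have hnR : (0:ℝ) < n := by exact_mod_cast hn
  set g : ℕ → ℝ := fun j => (n:ℝ) * ∫ τ in Ioc ((j:ℝ)/n) 1, quant Z τ with hgdef
  have hg_n : g n = 0 := by
    rw [hgdef]
    simp only
    rw [div_self (ne_of_gt hnR), Ioc_self, Measure.restrict_empty, integral_zero_measure,
      mul_zero]
  have hblock : ∀ j : ℕ, j < n →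
      g j - g (j+1) = (n:ℝ) * ∫ τ in Ioc ((j:ℝ)/n) (((j:ℝ)+1)/n), quant Z τ := by
    intro j hj
    rw [hgdef]
    simp only
    have hcast : (((j+1 : ℕ)):ℝ) = (j:ℝ) + 1 := by push_cast; ring
    rw [hcast, tail_split Z hZ hZi hn hj]
    ring
  calc (∑ i, q i * Yhat n Z i)
      = ∑ j ∈ Finset.range n, qn q j *
          ((n:ℝ) * ∫ τ in Ioc ((j:ℝ)/n) (((j:ℝ)+1)/n), quant Z τ) := by
        rw [← Fin.sum_univ_eq_sum_range (fun j => qn q j *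
          ((n:ℝ) * ∫ τ in Ioc ((j:ℝ)/n) (((j:ℝ)+1)/n), quant Z τ)) n]
        apply Finset.sum_congr rfl
        intro i _
        rw [qn, dif_pos i.isLt, Yhat]
    _ = ∑ j ∈ Finset.range n, qn q j * (g j - g (j+1)) := by
        apply Finset.sum_congr rfl
        intro j hj
        rw [hblock j (Finset.mem_range.1 hj)]
    _ = ∑ j ∈ Finset.range n, (qn q j - (if j = 0 then 0 else qn q (j-1))) * g j :=
        (abel_sum (qn q) g n hg_n).symm
    _ = ∑ j ∈ Finset.range n, qnd q j * g j := by
        apply Finset.sum_congr rfl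
        intro j _
        rfl

/-- convexity of the pairing against `Yhat`, for monotone nonnegative `q`. -/
lemma pair_Yhat_convex (hn : 0 < n) {q : Fin n → ℝ} (hq0 : ∀ i, 0 ≤ q i)
    (hqm : Monotone q) (Z Z' : ℝ → ℝ) (hZ : Measurable Z) (hZ' : Measurable Z')
    (hZi : Integrable Z stdP) (hZ'i : Integrable Z' stdP) {t : ℝ} (ht : t ∈ Icc (0:ℝ) 1) :
    (∑ i, q i * Yhat n (fun ω => t * Z ω + (1-t) * Z' ω) i)
      ≤ t * (∑ i, q i * Yhat n Z i) + (1-t) * (∑ i, q i * Yhat n Z' i) := by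
  have hWm : Measurable (fun ω => t * Z ω + (1-t) * Z' ω) :=
    (hZ.const_mul t).add (hZ'.const_mul (1-t))
  have hWi : Integrable (fun ω => t * Z ω + (1-t) * Z' ω) stdP :=
    (hZi.const_mul t).add (hZ'i.const_mul (1-t))
  rw [pair_Yhat hn q _ hWm hWi, pair_Yhat hn q Z hZ hZi, pair_Yhat hn q Z' hZ' hZ'i,
    Finset.mul_sum, Finset.mul_sum, ← Finset.sum_add_distrib]
  apply Finset.sum_le_sum
  intro j hj
  have hjn : j < n := Finset.mem_range.1 hj
  obtain ⟨h0, h1, _, _⟩ := block_bounds hn hjn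
  have hcoef : 0 ≤ qnd q j * (n:ℝ) := by
    apply mul_nonneg (qnd_nonneg hq0 hqm hjn) (by positivity)
  have hTl := Tl_convex Z Z' hZ hZ' hZi hZ'i ht ⟨h0, h1⟩
  calc qnd q j * ((n:ℝ) * ∫ τ in Ioc ((j:ℝ)/n) 1, quant (fun ω => t * Z ω + (1-t) * Z' ω) τ)
      ≤ qnd q j * ((n:ℝ) * (t * (∫ τ in Ioc ((j:ℝ)/n) 1, quant Z τ)
          + (1-t) * ∫ τ in Ioc ((j:ℝ)/n) 1, quant Z' τ)) := by
        rw [← mul_assoc, ← mul_assoc]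
        exact mul_le_mul_of_nonneg_left hTl hcoef
    _ = t * (qnd q j * ((n:ℝ) * ∫ τ in Ioc ((j:ℝ)/n) 1, quant Z τ))
          + (1-t) * (qnd q j * ((n:ℝ) * ∫ τ in Ioc ((j:ℝ)/n) 1, quant Z' τ)) := by
        ring

end YhatSec


section YhatSec2

variable {n : ℕ}

lemma block_Ioo_subset (hn : 0 < n) {k : ℕ} (hk : k < n) :
    Ioo ((k:ℝ)/n) (((k:ℝ)+1)/n) ⊆ Ioo (0:ℝ) 1 := by
  obtain ⟨h0, _, _, h3⟩ := block_bounds hn hk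
  exact Ioo_subset_Ioo h0 h3

lemma vol_block (hn : 0 < n) (k : ℕ) :
    (volume (Ioo ((k:ℝ)/n) (((k:ℝ)+1)/n))).toReal = 1/(n:ℝ) := by
  have hnR : (0:ℝ) < n := by exact_mod_cast hn
  have hdiff : ((k:ℝ)+1)/n - (k:ℝ)/n = 1/n := by
    rw [div_sub_div_same]; ring_nf
  rw [Real.volume_Ioo, hdiff, ENNReal.toReal_ofReal (by positivity)]

lemma Yhat_eq_Ioo (Z : ℝ → ℝ) (k : Fin n) :
    Yhat n Z k = (n:ℝ) * ∫ τ in Ioo (((k:ℕ):ℝ)/n) ((((k:ℕ):ℝ)+1)/n), quant Z τ := by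
  rw [Yhat, ← Measure.restrict_congr_set Ioo_ae_eq_Ioc]

lemma Yhat_mono_ae (hn : 0 < n) {Z Z' : ℝ → ℝ} (hZ : Measurable Z) (hZ' : Measurable Z')
    (hZi : Integrable Z stdP) (hZ'i : Integrable Z' stdP)
    (h : ∀ᵐ ω ∂stdP, Z' ω ≤ Z ω) (k : Fin n) : Yhat n Z' k ≤ Yhat n Z k := by
  rw [Yhat_eq_Ioo, Yhat_eq_Ioo]
  have hnR : (0:ℝ) ≤ n := by positivity
  apply mul_le_mul_of_nonneg_left _ hnR
  apply setIntegral_mono_on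
  · exact (integrableOn_quant Z' hZ' hZ'i).mono_set (block_Ioo_subset hn k.isLt)
  · exact (integrableOn_quant Z hZ hZi).mono_set (block_Ioo_subset hn k.isLt)
  · exact measurableSet_Ioo
  · intro τ hτ
    exact quant_le_quant hZ hZ' (cdf_le_of_ae_le h) (block_Ioo_subset hn k.isLt hτ)

lemma Yhat_add_const (hn : 0 < n) (Z : ℝ → ℝ) (hZ : Measurable Z) (hZi : Integrable Z stdP)
    (a : ℝ) : Yhat n (fun ω => Z ω + a) = fun k => Yhat n Z k + a := by
  funext k
  rw [Yhat_eq_Ioo, Yhat_eq_Ioo]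
  have hnR : (0:ℝ) < n := by exact_mod_cast hn
  have hcongr : ∫ τ in Ioo (((k:ℕ):ℝ)/n) ((((k:ℕ):ℝ)+1)/n), quant (fun ω => Z ω + a) τ
      = ∫ τ in Ioo (((k:ℕ):ℝ)/n) ((((k:ℕ):ℝ)+1)/n), (quant Z τ + a) := by
    apply setIntegral_congr_fun measurableSet_Ioo
    intro τ hτ
    exact quant_add_const Z hZ a (block_Ioo_subset hn k.isLt hτ)
  rw [hcongr, integral_add ((integrableOn_quant Z hZ hZi).mono_set
    (block_Ioo_subset hn k.isLt)) ((integrableOn_const (by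
      rw [Real.volume_Ioo]; exact ENNReal.ofReal_ne_top))), setIntegral_const, measureReal_def,
    vol_block hn k, smul_eq_mul]
  field_simp

lemma Yhat_const_mul (hn : 0 < n) (Z : ℝ → ℝ) (hZ : Measurable Z) (hZi : Integrable Z stdP)
    {t : ℝ} (ht : 0 < t) : Yhat n (fun ω => t * Z ω) = fun k => t * Yhat n Z k := by
  funext k
  rw [Yhat_eq_Ioo, Yhat_eq_Ioo]
  have hcongr : ∫ τ in Ioo (((k:ℕ):ℝ)/n) ((((k:ℕ):ℝ)+1)/n), quant (fun ω => t * Z ω) τ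
      = ∫ τ in Ioo (((k:ℕ):ℝ)/n) ((((k:ℕ):ℝ)+1)/n), (t * quant Z τ) := by
    apply setIntegral_congr_fun measurableSet_Ioo
    intro τ hτ
    exact quant_const_mul Z hZ ht (block_Ioo_subset hn k.isLt hτ)
  rw [hcongr, integral_const_mul]
  ring

lemma Yhat_zero_mul (hn : 0 < n) (Z : ℝ → ℝ) :
    Yhat n (fun ω => 0 * Z ω) = fun _ => (0:ℝ) := by
  funext k
  rw [Yhat_eq_Ioo]
  have hcongr : ∫ τ in Ioo (((k:ℕ):ℝ)/n) ((((k:ℕ):ℝ)+1)/n), quant (fun ω => 0 * Z ω) τ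
      = ∫ τ in Ioo (((k:ℕ):ℝ)/n) ((((k:ℕ):ℝ)+1)/n), (0:ℝ) := by
    apply setIntegral_congr_fun measurableSet_Ioo
    intro τ hτ
    exact quant_zero_mul Z (block_Ioo_subset hn k.isLt hτ)
  rw [hcongr, integral_zero, mul_zero]

lemma Yhat_step (hn : 0 < n) (Y : Fin n → ℝ) (Z : ℝ → ℝ)
    (h : cdf Z = cdfFinW (fun _ => (1:ℝ)/n) Y) :
    Yhat n Z = Y ∘ Tuple.sort Y := by
  have hq : quant Z = quantFinW (fun _ => (1:ℝ)/n) Y := by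
    funext τ
    rw [quant, quantFinW, h]
  funext k
  have hnR : (0:ℝ) < n := by exact_mod_cast hn
  obtain ⟨h0, h1, h2, h3⟩ := block_bounds hn k.isLt
  have hblk := block_integral_const h2 (quant Z) ((Y ∘ Tuple.sort Y) k) (by
    intro τ hτ
    rw [hq]
    have := quantFin_step hn Y k.isLt hτ.1.le hτ.2
    rw [this])
  rw [Yhat, hblk.2]
  have hdiff : ((k:ℕ):ℝ)/n + 1/n - ((k:ℕ):ℝ)/n = 1/n := by ring
  have : (((k:ℕ):ℝ)+1)/n - ((k:ℕ):ℝ)/n = 1/n := by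
    rw [div_sub_div_same]; ring_nf
  rw [this]
  field_simp

lemma Yhat_monotone (hn : 0 < n) (Z : ℝ → ℝ) (hZ : Measurable Z)
    (hZi : Integrable Z stdP) : Monotone (Yhat n Z) := by
  intro i j hij
  rcases eq_or_lt_of_le hij with heq | hlt
  · rw [heq]
  · have hij' : (i:ℕ) < (j:ℕ) := hlt
    set c := quant Z ((((i:ℕ):ℝ)+1)/n) with hc
    have hin : (i:ℕ) < n := i.isLt
    have hjn : (j:ℕ) < n := j.isLt
    have hnR : (0:ℝ) < n := by exact_mod_cast hn
    have hmidmem : (((i:ℕ):ℝ)+1)/n ∈ Ioo (0:ℝ) 1 := by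
      constructor
      · positivity
      · rw [div_lt_one hnR]
        have : ((i:ℕ):ℝ) + 1 ≤ ((j:ℕ):ℝ) := by exact_mod_cast hij'
        have : ((j:ℕ):ℝ) < (n:ℝ) := by exact_mod_cast hjn
        linarith [show ((i:ℕ):ℝ) + 1 ≤ ((j:ℕ):ℝ) from by exact_mod_cast hij']
    have hIntI : IntegrableOn (quant Z) (Ioo (((i:ℕ):ℝ)/n) ((((i:ℕ):ℝ)+1)/n)) volume :=
      (integrableOn_quant Z hZ hZi).mono_set (block_Ioo_subset hn hin)
    have hIntJ : IntegrableOn (quant Z) (Ioo (((j:ℕ):ℝ)/n) ((((j:ℕ):ℝ)+1)/n)) volume :=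
      (integrableOn_quant Z hZ hZi).mono_set (block_Ioo_subset hn hjn)
    have hconst : ∀ a b : ℝ, IntegrableOn (fun _ : ℝ => c) (Ioo a b) volume := by
      intro a b
      exact (integrableOn_const (by rw [Real.volume_Ioo]; exact ENNReal.ofReal_ne_top))
    have hub : Yhat n Z i ≤ c := by
      rw [Yhat_eq_Ioo]
      have : ∫ τ in Ioo (((i:ℕ):ℝ)/n) ((((i:ℕ):ℝ)+1)/n), quant Z τ
          ≤ ∫ τ in Ioo (((i:ℕ):ℝ)/n) ((((i:ℕ):ℝ)+1)/n), c := by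
        apply setIntegral_mono_on hIntI (hconst _ _) measurableSet_Ioo
        intro τ hτ
        exact quant_monotoneOn Z hZ (block_Ioo_subset hn hin hτ) hmidmem hτ.2.le
      calc (n:ℝ) * ∫ τ in Ioo (((i:ℕ):ℝ)/n) ((((i:ℕ):ℝ)+1)/n), quant Z τ
          ≤ (n:ℝ) * ∫ τ in Ioo (((i:ℕ):ℝ)/n) ((((i:ℕ):ℝ)+1)/n), c :=
            mul_le_mul_of_nonneg_left this (by positivity)
        _ = c := by
            rw [setIntegral_const, measureReal_def, vol_block hn, smul_eq_mul]
            field_simp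
    have hlb : c ≤ Yhat n Z j := by
      rw [Yhat_eq_Ioo]
      have hle : (((i:ℕ):ℝ)+1)/n ≤ ((j:ℕ):ℝ)/n := by
        gcongr
        exact_mod_cast hij'
      have : ∫ τ in Ioo (((j:ℕ):ℝ)/n) ((((j:ℕ):ℝ)+1)/n), c
          ≤ ∫ τ in Ioo (((j:ℕ):ℝ)/n) ((((j:ℕ):ℝ)+1)/n), quant Z τ := by
        apply setIntegral_mono_on (hconst _ _) hIntJ measurableSet_Ioo
        intro τ hτ
        exact quant_monotoneOn Z hZ hmidmem (block_Ioo_subset hn hjn hτ)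
          (le_trans hle hτ.1.le)
      calc c = (n:ℝ) * ∫ τ in Ioo (((j:ℕ):ℝ)/n) ((((j:ℕ):ℝ)+1)/n), c := by
            rw [setIntegral_const, measureReal_def, vol_block hn, smul_eq_mul]
            field_simp
        _ ≤ (n:ℝ) * ∫ τ in Ioo (((j:ℕ):ℝ)/n) ((((j:ℕ):ℝ)+1)/n), quant Z τ :=
            mul_le_mul_of_nonneg_left this (by positivity)
    exact le_trans hub hlb

end YhatSec2

/-- On a finite probability space with equal probabilities `1/n`,
every law invariant coherent risk measure is regular and admits a Kusuoka
representation. -/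
theorem finite_equal_probabilities_regular
    (n : ℕ) (hn : 0 < n) (ϱ : (Fin n → ℝ) → ℝ)
    (hmono : ∀ Y Y' : Fin n → ℝ, (∀ i, Y' i ≤ Y i) → ϱ Y' ≤ ϱ Y)
    (hconv : ∀ Y Y' : Fin n → ℝ, ∀ t : ℝ, t ∈ Icc (0:ℝ) 1 →
      ϱ (fun i => t * Y i + (1 - t) * Y' i) ≤ t * ϱ Y + (1 - t) * ϱ Y')
    (htrans : ∀ Y : Fin n → ℝ, ∀ a : ℝ, ϱ (fun i => Y i + a) = ϱ Y + a)
    (hhom : ∀ Y : Fin n → ℝ, ∀ t : ℝ, 0 ≤ t → ϱ (fun i => t * Y i) = t * ϱ Y)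
    (hli : ∀ Y : Fin n → ℝ, ∀ e : Equiv.Perm (Fin n), ϱ (Y ∘ e) = ϱ Y) :
    (∃ p : ℝ≥0∞, 1 ≤ p ∧ p ≠ ∞ ∧ ∃ ρ : (ℝ → ℝ) → ℝ,
      IsCoherent p ρ ∧ IsLawInvariant p ρ ∧
      ∀ Y : Fin n → ℝ, ∀ Z : ℝ → ℝ, MemLp Z p stdP →
        cdf Z = cdfFinW (fun _ => (1:ℝ)/n) Y → ρ Z = ϱ Y) ∧
    (∃ M : Set (Measure ℝ), (∀ μ ∈ M, IsP01 μ) ∧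
      ∀ Y : Fin n → ℝ,
        IsLUB {x : ℝ | ∃ μ ∈ M, x = ∫ α, avarFinW (fun _ => (1:ℝ)/n) Y α ∂μ} (ϱ Y)) := by
  constructor
  · -- Part 1 : the extension to L¹ of the standard space
    refine ⟨1, le_rfl, ENNReal.one_ne_top, fun Z => ϱ (Yhat n Z), ⟨?_, ?_, ?_, ?_⟩, ?_, ?_⟩
    · -- monotonicity
      intro Z Z' hZp hZ'p hle
      obtain ⟨Z₀, hZ₀m, hZ₀i, hZcdf, hZae⟩ := exists_rep Z hZp
      obtain ⟨Z₀', hZ₀'m, hZ₀'i, hZ'cdf, hZ'ae⟩ := exists_rep Z' hZ'p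
      simp only
      rw [Yhat_congr hZcdf, Yhat_congr hZ'cdf]
      apply hmono
      intro k
      apply Yhat_mono_ae hn hZ₀m hZ₀'m hZ₀i hZ₀'i
      filter_upwards [hle, hZae, hZ'ae] with ω h1 h2 h3
      rw [← h2, ← h3]
      exact h1
    · -- convexity
      intro Z Z' t hZp hZ'p ht
      obtain ⟨Z₀, hZ₀m, hZ₀i, hZcdf, hZae⟩ := exists_rep Z hZp
      obtain ⟨Z₀', hZ₀'m, hZ₀'i, hZ'cdf, hZ'ae⟩ := exists_rep Z' hZ'p
      have hWae : (fun ω => t * Z ω + (1-t) * Z' ω)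
          =ᵐ[stdP] (fun ω => t * Z₀ ω + (1-t) * Z₀' ω) := by
        filter_upwards [hZae, hZ'ae] with ω h1 h2
        rw [h1, h2]
      simp only
      rw [Yhat_congr (cdf_congr hWae), Yhat_congr hZcdf, Yhat_congr hZ'cdf]
      set W₀ : ℝ → ℝ := fun ω => t * Z₀ ω + (1-t) * Z₀' ω with hW₀
      have hW₀m : Measurable W₀ := (hZ₀m.const_mul t).add (hZ₀'m.const_mul (1-t))
      have hW₀i : Integrable W₀ stdP := (hZ₀i.const_mul t).add (hZ₀'i.const_mul (1-t))
      obtain ⟨q, hq, hqm, hqeq⟩ := exists_mono_subgrad ϱ hn hconv hhom hli (Yhat n W₀)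
      have hq0 : ∀ i, 0 ≤ q i := subgrad_nonneg ϱ hmono hhom hq
      have hsortV : (Yhat n W₀) ∘ (Tuple.sort (Yhat n W₀)) = Yhat n W₀ := by
        rw [Tuple.sort_eq_refl_iff_monotone.2 (Yhat_monotone hn W₀ hW₀m hW₀i)]
        rfl
      rw [hsortV] at hqeq
      calc ϱ (Yhat n W₀) = ∑ i, q i * Yhat n W₀ i := hqeq.symm
        _ ≤ t * (∑ i, q i * Yhat n Z₀ i) + (1-t) * (∑ i, q i * Yhat n Z₀' i) :=
            pair_Yhat_convex hn hq0 hqm Z₀ Z₀' hZ₀m hZ₀'m hZ₀i hZ₀'i ht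
        _ ≤ t * ϱ (Yhat n Z₀) + (1-t) * ϱ (Yhat n Z₀') := by
            apply add_le_add
            · exact mul_le_mul_of_nonneg_left (hq (Yhat n Z₀)) ht.1
            · exact mul_le_mul_of_nonneg_left (hq (Yhat n Z₀')) (by linarith [ht.2])
    · -- translation equivariance
      intro Z a hZp
      obtain ⟨Z₀, hZ₀m, hZ₀i, hZcdf, hZae⟩ := exists_rep Z hZp
      have haa : cdf (fun ω => Z ω + a) = cdf (fun ω => Z₀ ω + a) := by
        apply cdf_congr
        filter_upwards [hZae] with ω h
        rw [h]
      simp only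
      rw [Yhat_congr haa, Yhat_add_const hn Z₀ hZ₀m hZ₀i a, htrans (Yhat n Z₀) a,
        Yhat_congr hZcdf]
    · -- positive homogeneity
      intro Z t hZp ht
      rcases eq_or_lt_of_le ht with h0 | h0
      · simp only
        rw [← h0, Yhat_zero_mul hn Z, rho_zero ϱ hhom, zero_mul]
      · obtain ⟨Z₀, hZ₀m, hZ₀i, hZcdf, hZae⟩ := exists_rep Z hZp
        have haa : cdf (fun ω => t * Z ω) = cdf (fun ω => t * Z₀ ω) := by
          apply cdf_congr
          filter_upwards [hZae] with ω h
          rw [h]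
        simp only
        rw [Yhat_congr haa, Yhat_const_mul hn Z₀ hZ₀m hZ₀i h0,
          hhom (Yhat n Z₀) t ht, Yhat_congr hZcdf]
    · -- law invariance
      intro Z Z' hZp hZ'p hcdf
      simp only
      rw [Yhat_congr hcdf]
    · -- extension property
      intro Y Z hZp hcdf
      simp only
      rw [Yhat_step hn Y Z hcdf]
      exact hli Y (Tuple.sort Y)
  · -- Part 2 : the Kusuoka representation
    refine ⟨{μ | ∃ q : Fin n → ℝ,
      (∀ Y', (∑ i, q i * Y' i) ≤ ϱ Y') ∧ Monotone q ∧ μ = muOf n q}, ?_, ?_⟩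
    · rintro μ ⟨q, hq, hqm, rfl⟩
      exact muOf_isP01 hn (subgrad_nonneg ϱ hmono hhom hq) hqm
        (subgrad_sum_one ϱ htrans hhom hq)
    · intro Y
      constructor
      · rintro x ⟨μ, ⟨q, hq, hqm, rfl⟩, rfl⟩
        rw [kusuoka_integral_muOf hn Y (subgrad_nonneg ϱ hmono hhom hq) hqm]
        calc (∑ i, q i * (Y ∘ Tuple.sort Y) i) ≤ ϱ (Y ∘ Tuple.sort Y) := hq _
          _ = ϱ Y := hli Y (Tuple.sort Y)
      · intro b hb
        obtain ⟨q, hq, hqm, hqeq⟩ := exists_mono_subgrad ϱ hn hconv hhom hli Y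
        apply hb
        refine ⟨muOf n q, ⟨q, hq, hqm, rfl⟩, ?_⟩
        rw [kusuoka_integral_muOf hn Y (subgrad_nonneg ϱ hmono hhom hq) hqm]
        exact hqeq.symm

end
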